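/- arXiv:2406.03635 — 8 statements merged into one kernel-verified Lean document; each statement's English description precedes it below -/
import Mathlib

section
/- Let D be a digraph missing disjoint paths, and let {a,b}, {x,y}, {z,t} be missing edges of D with {x,y} ≠ {z,t}. If {a,b} loses to {x,y} and {a,b} loses to {z,t}, then {x,y} ∩ {z,t} ≠ ∅, i.e., the missing edges {x,y} and {z,t} share a vertex. -/
namespace SSNC

variable {V : Type*}

/-- The arc relation of an oriented graph: no digons (hence irreflexive). -/
def Oriented (A : V → V → Prop) : Prop := ∀ u v, A u v → ¬ A v u

/-- `u ∈ N⁺⁺(v)`: the second out-neighborhood. -/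
def SecondOut (A : V → V → Prop) (v u : V) : Prop :=
  u ≠ v ∧ ¬ A v u ∧ ∃ w, A v w ∧ A w u

/-- `{u, v}` is a missing edge of the digraph. -/
def IsMissing (A : V → V → Prop) (u v : V) : Prop :=
  u ≠ v ∧ ¬ A u v ∧ ¬ A v u

/-- The losing relation for a fixed labeling of the two pairs: `a→x`, `b→y`,
`y ∉ N⁺(a) ∪ N⁺⁺(a)` and `x ∉ N⁺(b) ∪ N⁺⁺(b)`. -/
def LosesOrd (A : V → V → Prop) (a b x y : V) : Prop :=
  A a x ∧ A b y ∧ ¬ A a y ∧ ¬ SecondOut A a y ∧ ¬ A b x ∧ ¬ SecondOut A b x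

/-- The missing edge `{a,b}` loses to the missing edge `{x,y}` (for some labeling). -/
def Loses (A : V → V → Prop) (a b x y : V) : Prop :=
  LosesOrd A a b x y ∨ LosesOrd A a b y x

/-- Degree of a vertex in the missing graph. -/
noncomputable def mdeg (A : V → V → Prop) (v : V) : ℕ :=
  ({w | IsMissing A v w} : Set V).ncard

/-- The missing graph, as a simple graph. -/
def missingGraph (A : V → V → Prop) : SimpleGraph V where
  Adj u v := IsMissing A u v
  symm := by
    constructor
    rintro u v ⟨h1, h2, h3⟩
    exact ⟨h1.symm, h3, h2⟩
  loopless := by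
    constructor
    rintro v ⟨h1, -, -⟩
    exact h1 rfl

/-- The missing graph is a vertex-disjoint union of paths
(equivalently: acyclic with maximum degree at most 2). -/
def MissingDisjointPaths (A : V → V → Prop) : Prop :=
  (missingGraph A).IsAcyclic ∧ ∀ v, mdeg A v ≤ 2

/-- The missing graph is a vertex-disjoint union of paths on exactly 3 vertices
(equivalently: every missing edge has one endpoint of missing-degree 1 and one of
missing-degree 2). -/
def MissingPaths2 (A : V → V → Prop) : Prop :=
  ∀ u v, IsMissing A u v →
    (mdeg A u = 1 ∧ mdeg A v = 2) ∨ (mdeg A u = 2 ∧ mdeg A v = 1)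

/-- The missing graph is a vertex-disjoint union of paths on 2 or 3 vertices. -/
def MissingPathsLe2 (A : V → V → Prop) : Prop :=
  ∀ u v, IsMissing A u v →
    (mdeg A u = 1 ∧ mdeg A v = 1) ∨ (mdeg A u = 1 ∧ mdeg A v = 2) ∨
    (mdeg A u = 2 ∧ mdeg A v = 1)

/-- Out-degree of the missing edge `{u,v}` in the dependency digraph `Δ(D)`:
the number of missing edges it loses to. -/
noncomputable def outDegDelta (A : V → V → Prop) (u v : V) : ℕ :=
  ({f : Sym2 V | ∃ x y, f = s(x, y) ∧ IsMissing A x y ∧ Loses A u v x y}).ncard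

/-- In-degree of the missing edge `{u,v}` in the dependency digraph `Δ(D)`:
the number of missing edges losing to it. -/
noncomputable def inDegDelta (A : V → V → Prop) (u v : V) : ℕ :=
  ({f : Sym2 V | ∃ x y, f = s(x, y) ∧ IsMissing A x y ∧ Loses A x y u v}).ncard

/-- `C = a₁b₁c₁, …, a_k b_k c_k` is a double cycle in `Δ(D)`: pairwise vertex-disjoint
missing paths of length 2 (`k ≥ 2`), where each of `{aᵢ,bᵢ}, {bᵢ,cᵢ}` loses to each of
`{aᵢ₊₁,bᵢ₊₁}, {bᵢ₊₁,cᵢ₊₁}` (indices modulo `k`). -/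
def IsDoubleCycle (A : V → V → Prop) (k : ℕ) (a b c : ZMod k → V) : Prop :=
  2 ≤ k ∧
  (∀ i, IsMissing A (a i) (b i) ∧ IsMissing A (b i) (c i) ∧ a i ≠ c i) ∧
  (∀ i j, i ≠ j → Disjoint ({a i, b i, c i} : Set V) {a j, b j, c j}) ∧
  (∀ i, Loses A (a i) (b i) (a (i + 1)) (b (i + 1)) ∧
        Loses A (a i) (b i) (b (i + 1)) (c (i + 1)) ∧
        Loses A (b i) (c i) (a (i + 1)) (b (i + 1)) ∧
        Loses A (b i) (c i) (b (i + 1)) (c (i + 1)))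

/-- `K(C)` for a double cycle `C`. -/
def Kset {k : ℕ} (a b c : ZMod k → V) : Set V :=
  {v | ∃ i, v = a i ∨ v = b i ∨ v = c i}

/-- Out-neighborhood in the subdigraph induced on `K`. -/
def outIn (A : V → V → Prop) (K : Set V) (v : V) : Set V := {u | u ∈ K ∧ A v u}

/-- In-neighborhood in the subdigraph induced on `K`. -/
def inIn (A : V → V → Prop) (K : Set V) (v : V) : Set V := {u | u ∈ K ∧ A u v}

/-- Second out-neighborhood in the subdigraph induced on `K`. -/
def secondOutIn (A : V → V → Prop) (K : Set V) (v : V) : Set V :=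
  {u | u ∈ K ∧ u ≠ v ∧ ¬ A v u ∧ ∃ w ∈ K, A v w ∧ A w u}

/-- Second in-neighborhood in the subdigraph induced on `K`. -/
def secondInIn (A : V → V → Prop) (K : Set V) (v : V) : Set V :=
  {u | u ∈ K ∧ u ≠ v ∧ ¬ A u v ∧ ∃ w ∈ K, A u w ∧ A w v}


private lemma loses_key {V : Type*} (A : V → V → Prop)
    (hAc : (missingGraph A).IsAcyclic)
    (a b x y z t : V) (hab : IsMissing A a b) (hxy : IsMissing A x y)
    (hzt : IsMissing A z t)
    (h1 : LosesOrd A a b x y) (h2 : LosesOrd A a b z t) :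
    (({x, y} : Set V) ∩ ({z, t} : Set V)).Nonempty := by
  by_contra hcon
  obtain ⟨hax, hby, hany, hsay, hnbx, hsbx⟩ := h1
  obtain ⟨haz, hbt, hant, hsat, hnbz, hsbz⟩ := h2
  have hxz : x ≠ z := by rintro rfl; exact hcon ⟨x, by simp⟩
  have hxt : x ≠ t := by rintro rfl; exact hcon ⟨x, by simp⟩
  have hyz : y ≠ z := by rintro rfl; exact hcon ⟨y, by simp⟩
  have hyt : y ≠ t := by rintro rfl; exact hcon ⟨y, by simp⟩
  have hya : y ≠ a := by rintro rfl; exact hab.2.2 hby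
  have hta : t ≠ a := by rintro rfl; exact hab.2.2 hbt
  have hzb : z ≠ b := by rintro rfl; exact hab.2.1 haz
  have hxb : x ≠ b := by rintro rfl; exact hab.2.1 hax
  have htz : t ≠ z := fun h => hzt.1 h.symm
  have hmyz : IsMissing A y z := by
    refine ⟨hyz, fun h => hsbz ⟨hzb, hnbz, y, hby, h⟩,
      fun h => hsay ⟨hya, hany, z, haz, h⟩⟩
  have hmxt : IsMissing A x t := by
    refine ⟨hxt, fun h => hsat ⟨hta, hant, x, hax, h⟩,
      fun h => hsbx ⟨hxb, hnbx, t, hbt, h⟩⟩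
  have adj_xy : (missingGraph A).Adj x y := hxy
  have adj_yz : (missingGraph A).Adj y z := hmyz
  have adj_xt : (missingGraph A).Adj x t := hmxt
  have adj_tz : (missingGraph A).Adj t z := ⟨fun h => hzt.1 h.symm, hzt.2.2, hzt.2.1⟩
  have hp1 : ((SimpleGraph.Walk.cons adj_xy
      (SimpleGraph.Walk.cons adj_yz SimpleGraph.Walk.nil))).IsPath := by
    simp [SimpleGraph.Walk.isPath_def, hxy.1, hxz, hyz]
  have hp2 : ((SimpleGraph.Walk.cons adj_xt
      (SimpleGraph.Walk.cons adj_tz SimpleGraph.Walk.nil))).IsPath := by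
    simp [SimpleGraph.Walk.isPath_def, hmxt.1, hxz, htz]
  have := (SimpleGraph.isAcyclic_iff_path_unique.mp hAc) ⟨_, hp1⟩ ⟨_, hp2⟩
  have hsupp := congrArg (fun p : (missingGraph A).Path x z => p.1.support) this
  simp [SimpleGraph.Walk.support_cons] at hsupp
  exact hyt hsupp

/-- Lemma 4.1: common out-neighbors in `Δ(D)` of a missing edge share a vertex. -/
theorem stmt1 {V : Type*} [Fintype V] (A : V → V → Prop) (hA : Oriented A)
    (hP : MissingDisjointPaths A) (a b x y z t : V)
    (hab : IsMissing A a b) (hxy : IsMissing A x y) (hzt : IsMissing A z t)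
    (hne : ({x, y} : Set V) ≠ ({z, t} : Set V))
    (h1 : Loses A a b x y) (h2 : Loses A a b z t) :
    (({x, y} : Set V) ∩ ({z, t} : Set V)).Nonempty := by
  have hyx : IsMissing A y x := ⟨fun h => hxy.1 h.symm, hxy.2.2, hxy.2.1⟩
  have htz : IsMissing A t z := ⟨fun h => hzt.1 h.symm, hzt.2.2, hzt.2.1⟩
  rcases h1 with h1 | h1 <;> rcases h2 with h2 | h2
  · exact loses_key A hP.1 a b x y z t hab hxy hzt h1 h2
  · rw [Set.pair_comm z t]
    exact loses_key A hP.1 a b x y t z hab hxy htz h1 h2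
  · rw [Set.pair_comm x y]
    exact loses_key A hP.1 a b y x z t hab hyx hzt h1 h2
  · rw [Set.pair_comm x y]
    rw [Set.pair_comm z t]
    exact loses_key A hP.1 a b y x t z hab hyx htz h1 h2

end SSNC
end

section
/- If D is a digraph missing disjoint paths, then every missing edge of D has out-degree at most 2 and in-degree at most 2 in the dependency digraph Δ(D); that is, each missing edge loses to at most 2 missing edges and at most 2 missing edges lose to it. -/
namespace SSNC

variable {V : Type*}

private lemma c4_not_acyclic {V : Type*} (G : SimpleGraph V) {a b c d : V} (hab : G.Adj a b)
    (hbc : G.Adj b c) (hcd : G.Adj c d) (hda : G.Adj d a) (hac : a ≠ c) (hbd : b ≠ d) :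
    ¬ G.IsAcyclic := by
  intro h
  have hC : (SimpleGraph.Walk.cons hab (SimpleGraph.Walk.cons hbc
      (SimpleGraph.Walk.cons hcd (SimpleGraph.Walk.cons hda SimpleGraph.Walk.nil)))).IsCycle := by
    have h1 := hab.ne
    have h2 := hbc.ne
    have h3 := hcd.ne
    have h4 := hda.ne
    have h1' := h1.symm
    have h2' := h2.symm
    have h3' := h3.symm
    have h4' := h4.symm
    have hac' := hac.symm
    have hbd' := hbd.symm
    constructor
    constructor
    · simp [SimpleGraph.Walk.isTrail_def, Sym2.eq, Sym2.rel_iff']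
      tauto
    · simp
    · simp
      tauto
  exact h _ hC

private lemma three_nbrs {V : Type*} [Fintype V] {A : V → V → Prop}
    (hdeg : ∀ v, mdeg A v ≤ 2) {z a b c : V} (ha : IsMissing A z a) (hb : IsMissing A z b)
    (hc : IsMissing A z c) (hab : a ≠ b) (hac : a ≠ c) (hbc : b ≠ c) : False := by
  have hsub : ({a, b, c} : Set V) ⊆ {w | IsMissing A z w} := by
    rintro w (rfl | rfl | rfl) <;> assumption
  have h3 : ({a, b, c} : Set V).ncard = 3 :=
    Set.ncard_eq_three.mpr ⟨a, b, c, hab, hac, hbc, rfl⟩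
  have hle : ({a, b, c} : Set V).ncard ≤ mdeg A z :=
    Set.ncard_le_ncard hsub (Set.toFinite _)
  have := hdeg z
  omega

private lemma missing_symm {V : Type*} {A : V → V → Prop} {a b : V}
    (h : IsMissing A a b) : IsMissing A b a := ⟨h.1.symm, h.2.2, h.2.1⟩

/-- Key combinatorial lemma: three pairwise-distinct missing edges `{xᵢ, yᵢ}` such that every
`{xᵢ, yⱼ}` is also a missing edge contradict "missing disjoint paths". -/
private lemma key_lemma {V : Type*} [Fintype V] {A : V → V → Prop}
    (hP : MissingDisjointPaths A) {x1 y1 x2 y2 x3 y3 : V}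
    (m11 : IsMissing A x1 y1) (m12 : IsMissing A x1 y2) (m13 : IsMissing A x1 y3)
    (m21 : IsMissing A x2 y1) (m22 : IsMissing A x2 y2) (m23 : IsMissing A x2 y3)
    (m31 : IsMissing A x3 y1) (m32 : IsMissing A x3 y2) (m33 : IsMissing A x3 y3)
    (d12 : s(x1, y1) ≠ s(x2, y2)) (d13 : s(x1, y1) ≠ s(x3, y3))
    (d23 : s(x2, y2) ≠ s(x3, y3)) : False := by
  obtain ⟨hac, hdeg⟩ := hP
  -- pairwise claim: any two of the edges share an x or a y
  have pairC : ∀ {p q r t : V}, IsMissing A p q → IsMissing A p t → IsMissing A r q →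
      IsMissing A r t → p = r ∨ q = t := by
    intro p q r t h h' h2 h3
    by_contra hcon
    push_neg at hcon
    exact c4_not_acyclic (missingGraph A) (show (missingGraph A).Adj p q from h)
      (show (missingGraph A).Adj q r from missing_symm h2)
      (show (missingGraph A).Adj r t from h3)
      (show (missingGraph A).Adj t p from missing_symm h') hcon.1 hcon.2 hac
  have dne : ∀ {p q r t : V}, s(p, q) ≠ s(r, t) → p = r → q ≠ t := by
    intro p q r t hd hp hq
    exact hd (by rw [hp, hq])
  by_cases h12 : x1 = x2
  · by_cases h13 : x1 = x3
    · -- all x equal, the three y's are distinct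
      have hy12 : y1 ≠ y2 := dne d12 h12
      have hy13 : y1 ≠ y3 := dne d13 h13
      have hy23 : y2 ≠ y3 := dne d23 (h12 ▸ h13)
      exact three_nbrs hdeg m11 m12 m13 hy12 hy13 hy23
    · have hy13 : y1 = y3 := (pairC m11 m13 m31 m33).resolve_left h13
      rcases pairC m22 m23 m32 m33 with h23 | h23
      · exact h13 (h12.trans h23)
      · exact d12 (by rw [h12, hy13, h23])
  · have hy12 : y1 = y2 := (pairC m11 m12 m21 m22).resolve_left h12
    by_cases h13 : y1 = y3
    · -- all y equal, the three x's are distinct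
      have hx13 : x1 ≠ x3 := fun h => d13 (by rw [h, h13])
      have hx23 : x2 ≠ x3 := fun h => d23 (by rw [h, ← hy12, h13])
      exact three_nbrs hdeg (missing_symm m11) (missing_symm m21) (missing_symm m31)
        h12 hx13 hx23
    · have hx13 : x1 = x3 := (pairC m11 m13 m31 m33).resolve_right h13
      rcases pairC m22 m23 m32 m33 with h23 | h23
      · exact h12 (hx13.trans h23.symm)
      · exact h13 (hy12.trans h23)

private lemma losesOrd_swap {V : Type*} {A : V → V → Prop} {a b x y : V}
    (h : LosesOrd A a b x y) : LosesOrd A b a y x :=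
  ⟨h.2.1, h.1, h.2.2.2.2.1, h.2.2.2.2.2, h.2.2.1, h.2.2.2.1⟩

/-- Cross missing edge for the out-degree argument. -/
private lemma outCross {V : Type*} {A : V → V → Prop} {u v p q r t : V}
    (huv : IsMissing A u v) (h : LosesOrd A u v p q) (h2 : LosesOrd A u v r t) :
    IsMissing A p t := by
  obtain ⟨hup, hvq, -, -, hvp, hSvp⟩ := h
  obtain ⟨hur, hvt, hut, hSut, -, -⟩ := h2
  have htu : t ≠ u := fun h => huv.2.2 (h ▸ hvt)
  have hpv : p ≠ v := fun h => huv.2.1 (h ▸ hup)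
  refine ⟨fun h => hut (h ▸ hup), ?_, ?_⟩
  · intro hpt
    exact hSut ⟨htu, hut, p, hup, hpt⟩
  · intro htp
    exact hSvp ⟨hpv, hvp, t, hvt, htp⟩

/-- Cross missing edge for the in-degree argument. -/
private lemma inCross {V : Type*} {A : V → V → Prop} {u v p q r t : V}
    (hpq : IsMissing A p q) (hrt : IsMissing A r t)
    (h : LosesOrd A p q u v) (h2 : LosesOrd A r t u v) :
    IsMissing A p t := by
  obtain ⟨hpu, hqv, hpv, hSpv, -, -⟩ := h
  obtain ⟨hru, htv, -, -, htu, hStu⟩ := h2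
  have hvp : v ≠ p := fun h => hpq.2.2 (h ▸ hqv)
  have hut : u ≠ t := fun h => hrt.2.1 (h ▸ hru)
  refine ⟨fun h => htu (h ▸ hpu), ?_, ?_⟩
  · intro hpt
    exact hSpv ⟨hvp, hpv, t, hpt, htv⟩
  · intro htp
    exact hStu ⟨hut, htu, p, htp, hpu⟩

/-- Proposition 4.4: in a digraph missing disjoint paths, every missing edge has
in- and out-degree at most 2 in the dependency digraph. -/
theorem stmt4 {V : Type*} [Fintype V] (A : V → V → Prop) (hA : Oriented A)
    (hP : MissingDisjointPaths A) :
    ∀ u v, IsMissing A u v → outDegDelta A u v ≤ 2 ∧ inDegDelta A u v ≤ 2 := by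
  intro u v huv
  constructor
  · -- out-degree
    by_contra hcon
    push_neg at hcon
    rw [outDegDelta, Set.two_lt_ncard (Set.toFinite _)] at hcon
    obtain ⟨f1, hf1, f2, hf2, f3, hf3, hne12, hne13, hne23⟩ := hcon
    -- normalize each edge to an ordered pair with `LosesOrd A u v`
    have norm : ∀ f : Sym2 V, f ∈ {f : Sym2 V | ∃ x y, f = s(x, y) ∧ IsMissing A x y ∧
        Loses A u v x y} → ∃ p q, f = s(p, q) ∧ IsMissing A p q ∧ LosesOrd A u v p q := by
      rintro f ⟨x, y, rfl, hm, hl | hl⟩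
      · exact ⟨x, y, rfl, hm, hl⟩
      · exact ⟨y, x, Sym2.eq_swap, missing_symm hm, hl⟩
    obtain ⟨p1, q1, he1, hm1, hl1⟩ := norm f1 hf1
    obtain ⟨p2, q2, he2, hm2, hl2⟩ := norm f2 hf2
    obtain ⟨p3, q3, he3, hm3, hl3⟩ := norm f3 hf3
    subst he1; subst he2; subst he3
    exact key_lemma hP (outCross huv hl1 hl1) (outCross huv hl1 hl2) (outCross huv hl1 hl3)
      (outCross huv hl2 hl1) (outCross huv hl2 hl2) (outCross huv hl2 hl3)
      (outCross huv hl3 hl1) (outCross huv hl3 hl2) (outCross huv hl3 hl3)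
      hne12 hne13 hne23
  · -- in-degree
    by_contra hcon
    push_neg at hcon
    rw [inDegDelta, Set.two_lt_ncard (Set.toFinite _)] at hcon
    obtain ⟨f1, hf1, f2, hf2, f3, hf3, hne12, hne13, hne23⟩ := hcon
    have norm : ∀ f : Sym2 V, f ∈ {f : Sym2 V | ∃ x y, f = s(x, y) ∧ IsMissing A x y ∧
        Loses A x y u v} → ∃ p q, f = s(p, q) ∧ IsMissing A p q ∧ LosesOrd A p q u v := by
      rintro f ⟨x, y, rfl, hm, hl | hl⟩
      · exact ⟨x, y, rfl, hm, hl⟩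
      · exact ⟨y, x, Sym2.eq_swap, missing_symm hm, losesOrd_swap hl⟩
    obtain ⟨p1, q1, he1, hm1, hl1⟩ := norm f1 hf1
    obtain ⟨p2, q2, he2, hm2, hl2⟩ := norm f2 hf2
    obtain ⟨p3, q3, he3, hm3, hl3⟩ := norm f3 hf3
    subst he1; subst he2; subst he3
    exact key_lemma hP (inCross hm1 hm1 hl1 hl1) (inCross hm1 hm2 hl1 hl2)
      (inCross hm1 hm3 hl1 hl3) (inCross hm2 hm1 hl2 hl1) (inCross hm2 hm2 hl2 hl2)
      (inCross hm2 hm3 hl2 hl3) (inCross hm3 hm1 hl3 hl1) (inCross hm3 hm2 hl3 hl2)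
      (inCross hm3 hm3 hl3 hl3) hne12 hne13 hne23

end SSNC
end

section
/- Let D be a tournament missing disjoint paths of length 2 and let C = a_1b_1c_1, …, a_kb_kc_k be a double cycle in Δ(D). For each i ∈ {1,…,k} let (x_i, y_i) be an ordered pair with {x_i,y_i} = {a_i,b_i} or {x_i,y_i} = {b_i,c_i}. Then for every j ∈ {1,…,k} and every i ∈ {1,…,k} with i ≠ j: (1) if x_j→x_i then y_i→x_j; (2) if x_j→y_i then x_i→x_j; (3) if y_j→x_i then y_i→y_j; (4) if y_j→y_i then x_i→y_j. -/
namespace SSNC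

variable {V : Type*}

section Lemma46Aux

variable {A : V → V → Prop} {k : ℕ} {a b c : ZMod k → V}

lemma isMissing_symm' {u v : V} (h : IsMissing A u v) : IsMissing A v u :=
  ⟨h.1.symm, h.2.2, h.2.1⟩

lemma losesOrd_swap' {u v p q : V} (h : LosesOrd A u v p q) : LosesOrd A v u q p :=
  ⟨h.2.1, h.1, h.2.2.2.2.1, h.2.2.2.2.2, h.2.2.1, h.2.2.2.1⟩

lemma loses_symm2' {u v p q : V} (h : Loses A u v p q) : Loses A u v q p := h.symm

lemma loses_symm1' {u v p q : V} (h : Loses A u v p q) : Loses A v u p q := by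
  rcases h with h | h
  · exact Or.inr (losesOrd_swap' h)
  · exact Or.inl (losesOrd_swap' h)

lemma loses_endpoint' {u v p q z : V} (h : Loses A u v p q) (hp : A z p) (hq : A z q)
    (hz : z = u ∨ z = v) : False := by
  rcases h with ⟨h1, h2, h3, h4, h5, h6⟩ | ⟨h1, h2, h3, h4, h5, h6⟩ <;>
    rcases hz with rfl | rfl <;>
    first
      | exact h3 hq | exact h5 hp | exact h3 hp | exact h5 hq

lemma loses_step' {u v p q z : V} (h : Loses A u v p q)
    (hp : A z p) (hq : A z q) (hzu : z ≠ u) (hzv : z ≠ v)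
    (hqu : q ≠ u) (hpu : p ≠ u) (hqv : q ≠ v) (hpv : p ≠ v)
    (hmu : ¬ IsMissing A u z) (hmv : ¬ IsMissing A v z) : A z u ∧ A z v := by
  have hno : ¬ A u z ∧ ¬ A v z := by
    rcases h with ⟨h1, h2, h3, h4, h5, h6⟩ | ⟨h1, h2, h3, h4, h5, h6⟩
    · exact ⟨fun huz => h4 ⟨hqu, h3, z, huz, hq⟩, fun hvz => h6 ⟨hpv, h5, z, hvz, hp⟩⟩
    · exact ⟨fun huz => h4 ⟨hpu, h3, z, huz, hp⟩, fun hvz => h6 ⟨hqv, h5, z, hvz, hq⟩⟩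
  constructor
  · by_contra hzu'
    exact hmu ⟨fun e => hzu e.symm, hno.1, hzu'⟩
  · by_contra hzv'
    exact hmv ⟨fun e => hzv e.symm, hno.2, hzv'⟩

lemma path_nbrs' [Fintype V] (hP : MissingPaths2 A) {u v w : V}
    (hm1 : IsMissing A u v) (hm2 : IsMissing A v w) (huw : u ≠ w) :
    (∀ t, IsMissing A u t → t = v) ∧ (∀ t, IsMissing A v t → t = u ∨ t = w) ∧
    (∀ t, IsMissing A w t → t = v) := by
  have hsub : ({u, w} : Set V) ⊆ {t | IsMissing A v t} := by
    rintro t (rfl | rfl)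
    · exact isMissing_symm' hm1
    · exact hm2
  have h2le : 2 ≤ mdeg A v := by
    have := Set.ncard_le_ncard hsub (Set.toFinite _)
    rwa [Set.ncard_pair huw] at this
  have hv2 : mdeg A v = 2 := by
    rcases hP u v hm1 with ⟨h1, h2⟩ | ⟨h1, h2⟩
    · exact h2
    · omega
  have hu1 : mdeg A u = 1 := by
    rcases hP u v hm1 with ⟨h1, h2⟩ | ⟨h1, h2⟩
    · exact h1
    · omega
  have hw1 : mdeg A w = 1 := by
    rcases hP v w hm2 with ⟨h1, h2⟩ | ⟨h1, h2⟩
    · omega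
    · exact h2
  have hone : ∀ s : V, mdeg A s = 1 → ∀ r, IsMissing A s r → ∀ t, IsMissing A s t → t = r := by
    intro s hs r hr t ht
    obtain ⟨x0, hx0⟩ := Set.ncard_eq_one.mp hs
    have h1 : r ∈ ({x0} : Set V) := hx0 ▸ hr
    have h2 : t ∈ ({x0} : Set V) := hx0 ▸ ht
    exact (Set.mem_singleton_iff.mp h2).trans (Set.mem_singleton_iff.mp h1).symm
  have hveq : {t | IsMissing A v t} = ({u, w} : Set V) :=
    (Set.eq_of_subset_of_ncard_le hsub
      (by rw [Set.ncard_pair huw]; exact le_of_eq hv2) (Set.toFinite _)).symm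
  refine ⟨hone u hu1 v hm1, ?_, hone w hw1 v (isMissing_symm' hm2)⟩
  intro t ht
  have : t ∈ ({u, w} : Set V) := hveq ▸ ht
  simpa using this

/-- membership in the `i`-th missing path -/
abbrev Pmem (a b c : ZMod k → V) (i : ZMod k) (z : V) : Prop :=
  z = a i ∨ z = b i ∨ z = c i

/-- `{p,q}` is one of the two missing edges of the `i`-th path -/
abbrev Edg (a b c : ZMod k → V) (i : ZMod k) (p q : V) : Prop :=
  ({p, q} : Set V) = {a i, b i} ∨ ({p, q} : Set V) = {b i, c i}

lemma edg_cases' {i : ZMod k} {p q : V} (h : Edg a b c i p q) :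
    (p = a i ∧ q = b i) ∨ (p = b i ∧ q = a i) ∨ (p = b i ∧ q = c i) ∨ (p = c i ∧ q = b i) := by
  rcases h with h | h <;> rcases Set.pair_eq_pair_iff.mp h with h' | h' <;> tauto

lemma edg_symm' {i : ZMod k} {p q : V} (h : Edg a b c i p q) : Edg a b c i q p := by
  rcases h with h | h
  · exact Or.inl (by rw [Set.pair_comm q p]; exact h)
  · exact Or.inr (by rw [Set.pair_comm q p]; exact h)

lemma edg_mem_left' {i : ZMod k} {p q : V} (h : Edg a b c i p q) : Pmem a b c i p := by
  rcases edg_cases' h with ⟨h1, h2⟩ | ⟨h1, h2⟩ | ⟨h1, h2⟩ | ⟨h1, h2⟩ <;> tauto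

lemma edg_mem_right' {i : ZMod k} {p q : V} (h : Edg a b c i p q) : Pmem a b c i q := by
  rcases edg_cases' h with ⟨h1, h2⟩ | ⟨h1, h2⟩ | ⟨h1, h2⟩ | ⟨h1, h2⟩ <;> tauto

lemma cross' [Fintype V] (hP : MissingPaths2 A) (hC : IsDoubleCycle A k a b c)
    {i j : ZMod k} (hij : i ≠ j) {p q : V} (hp : Pmem a b c i p) (hq : Pmem a b c j q) :
    q ≠ p ∧ ¬ IsMissing A p q := by
  obtain ⟨hk2, hmiss, hdisj, hlose⟩ := hC
  have hd := hdisj i j hij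
  have hqS : q ∈ ({a j, b j, c j} : Set V) := by rcases hq with rfl | rfl | rfl <;> simp
  have hpS : p ∈ ({a i, b i, c i} : Set V) := by rcases hp with rfl | rfl | rfl <;> simp
  have hne : p ≠ q := fun h => (Set.disjoint_left.mp hd hpS) (h ▸ hqS)
  refine ⟨hne.symm, ?_⟩
  intro hm
  obtain ⟨hm1, hm2, hac⟩ := hmiss i
  obtain ⟨n1, n2, n3⟩ := path_nbrs' hP hm1 hm2 hac
  have hmem : q ∈ ({a i, b i, c i} : Set V) := by
    rcases hp with rfl | rfl | rfl
    · rw [n1 q hm]; simp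
    · rcases n2 q hm with rfl | rfl <;> simp
    · rw [n3 q hm]; simp
  exact Set.disjoint_left.mp hd hmem hqS

lemma edg_loses' (hC : IsDoubleCycle A k a b c) {i : ZMod k} {u v p q : V}
    (h1 : Edg a b c i u v) (h2 : Edg a b c (i + 1) p q) : Loses A u v p q := by
  obtain ⟨-, -, -, hlose⟩ := hC
  obtain ⟨l1, l2, l3, l4⟩ := hlose i
  have H : Loses A u v (a (i + 1)) (b (i + 1)) ∧ Loses A u v (b (i + 1)) (c (i + 1)) := by
    rcases edg_cases' h1 with ⟨rfl, rfl⟩ | ⟨rfl, rfl⟩ | ⟨rfl, rfl⟩ | ⟨rfl, rfl⟩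
    · exact ⟨l1, l2⟩
    · exact ⟨loses_symm1' l1, loses_symm1' l2⟩
    · exact ⟨l3, l4⟩
    · exact ⟨loses_symm1' l3, loses_symm1' l4⟩
  rcases edg_cases' h2 with ⟨rfl, rfl⟩ | ⟨rfl, rfl⟩ | ⟨rfl, rfl⟩ | ⟨rfl, rfl⟩
  · exact H.1
  · exact loses_symm2' H.1
  · exact H.2
  · exact loses_symm2' H.2

lemma noDom' [Fintype V] (hA : Oriented A) (hP : MissingPaths2 A)
    (hC : IsDoubleCycle A k a b c) :
    ∀ n : ℕ, 1 ≤ n → n < k → ∀ (j : ZMod k) (z : V), Pmem a b c j z →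
      ∀ p q : V, Edg a b c (j + (n : ZMod k)) p q → A z p → A z q → False := by
  have hk2 := hC.1
  haveI : NeZero k := ⟨by omega⟩
  haveI : Fact (1 < k) := ⟨by omega⟩
  intro n
  induction n with
  | zero => omega
  | succ m ih =>
    intro _ hlt j z hz p q he hp hq
    rcases Nat.eq_zero_or_pos m with rfl | hm
    · have he' : Edg a b c (j + 1) p q := by
        rw [show (((0 + 1 : ℕ)) : ZMod k) = 1 by norm_num] at he
        exact he
      rcases hz with rfl | rfl | rfl
      · exact loses_endpoint' (edg_loses' hC (Or.inl rfl) he') hp hq (Or.inl rfl)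
      · exact loses_endpoint' (edg_loses' hC (Or.inl rfl) he') hp hq (Or.inr rfl)
      · exact loses_endpoint' (edg_loses' hC (Or.inr rfl) he') hp hq (Or.inr rfl)
    · set i' : ZMod k := j + (m : ZMod k) with hi'
      have hcast : (j + (((m + 1 : ℕ)) : ZMod k)) = i' + 1 := by
        rw [hi']; push_cast; ring
      have he' : Edg a b c (i' + 1) p q := by rw [← hcast]; exact he
      have hmne : (m : ZMod k) ≠ 0 := by
        intro h
        have hdvd := (ZMod.natCast_eq_zero_iff m k).mp h
        have := Nat.le_of_dvd hm hdvd
        omega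
      have hne1 : i' ≠ j := by
        rw [hi']
        intro h
        exact hmne (by rwa [add_comm, add_eq_right] at h)
      have hne2 : i' ≠ i' + 1 := by
        intro h
        exact one_ne_zero ((left_eq_add.mp h))
      have hu : Pmem a b c i' (a i') := Or.inl rfl
      have hv : Pmem a b c i' (b i') := Or.inr (Or.inl rfl)
      have hpm : Pmem a b c (i' + 1) p := edg_mem_left' he'
      have hqm : Pmem a b c (i' + 1) q := edg_mem_right' he'
      have L : Loses A (a i') (b i') p q := edg_loses' hC (Or.inl rfl) he'
      have cuz := cross' hP hC hne1 hu hz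
      have cvz := cross' hP hC hne1 hv hz
      have cuq := cross' hP hC hne2 hu hqm
      have cup := cross' hP hC hne2 hu hpm
      have cvq := cross' hP hC hne2 hv hqm
      have cvp := cross' hP hC hne2 hv hpm
      obtain ⟨hzu, hzv⟩ := loses_step' L hp hq cuz.1 cvz.1
        cuq.1 cup.1 cvq.1 cvp.1 cuz.2 cvz.2
      exact ih hm (by omega) j z hz (a i') (b i') (Or.inl rfl) hzu hzv

end Lemma46Aux

/-- Lemma 4.6. -/
theorem stmt5 {V : Type*} [Fintype V] (A : V → V → Prop) (hA : Oriented A)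
    (hP : MissingPaths2 A) (k : ℕ) (a b c : ZMod k → V)
    (hC : IsDoubleCycle A k a b c) (x y : ZMod k → V)
    (hsel : ∀ i, ({x i, y i} : Set V) = ({a i, b i} : Set V) ∨
                 ({x i, y i} : Set V) = ({b i, c i} : Set V)) :
    ∀ j i, i ≠ j →
      (A (x j) (x i) → A (y i) (x j)) ∧
      (A (x j) (y i) → A (x i) (x j)) ∧
      (A (y j) (x i) → A (y i) (y j)) ∧
      (A (y j) (y i) → A (x i) (y j)) := by
  have hk2 := hC.1
  haveI : NeZero k := ⟨by omega⟩
  intro j i hij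
  have hEi : Edg a b c i (x i) (y i) := hsel i
  have hEj : Edg a b c j (x j) (y j) := hsel j
  have hxj : Pmem a b c j (x j) := edg_mem_left' hEj
  have hyj : Pmem a b c j (y j) := edg_mem_right' hEj
  have main : ∀ z, Pmem a b c j z → ∀ p q, Edg a b c i p q → A z p → A z q → False := by
    intro z hz p q he hp hq
    have h1 : 1 ≤ (i - j).val := by
      have hne : i - j ≠ 0 := sub_ne_zero.mpr hij
      have := (ZMod.val_eq_zero (i - j)).not.mpr hne
      omega
    have h2 : (i - j).val < k := ZMod.val_lt _
    have h3 : j + (((i - j).val : ℕ) : ZMod k) = i := by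
      rw [ZMod.natCast_zmod_val]; ring
    exact noDom' hA hP hC (i - j).val h1 h2 j z hz p q (by rw [h3]; exact he) hp hq
  have fin : ∀ z, Pmem a b c j z → ∀ p q, Edg a b c i p q → A z q → A p z := by
    intro z hz p q he h
    have hpmem : Pmem a b c i p := edg_mem_left' he
    have c1 := cross' hP hC hij hpmem hz
    by_contra hnp
    have hzp : A z p := by
      by_contra h'
      exact c1.2 ⟨c1.1.symm, hnp, h'⟩
    exact main z hz p q he hzp h
  refine ⟨?_, ?_, ?_, ?_⟩ <;> intro h
  · exact fin (x j) hxj (y i) (x i) (edg_symm' hEi) h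
  · exact fin (x j) hxj (x i) (y i) hEi h
  · exact fin (y j) hyj (y i) (x i) (edg_symm' hEi) h
  · exact fin (y j) hyj (x i) (y i) hEi h

end SSNC
end

section
/- Let D be a tournament missing disjoint paths of length 2 and let C = a_1b_1c_1, …, a_kb_kc_k be a double cycle in Δ(D). For each i ∈ {1,…,k} let (x_i, y_i) be an ordered pair with {x_i,y_i} = {a_i,b_i} or {x_i,y_i} = {b_i,c_i}. Then for every j ∈ {1,…,k} and every i ∈ {1,…,k} with i ≠ j: (1) x_j→x_i if and only if y_i→x_j; (2) x_j→y_i if and only if x_i→x_j; (3) y_j→x_i if and only if y_i→y_j; (4) y_j→y_i if and only if x_i→y_j. -/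
namespace SSNC

variable {V : Type*}

/-- Corollary 4.7. -/
theorem stmt6 {V : Type*} [Fintype V] (A : V → V → Prop) (hA : Oriented A)
    (hP : MissingPaths2 A) (k : ℕ) (a b c : ZMod k → V)
    (hC : IsDoubleCycle A k a b c) (x y : ZMod k → V)
    (hsel : ∀ i, ({x i, y i} : Set V) = ({a i, b i} : Set V) ∨
                 ({x i, y i} : Set V) = ({b i, c i} : Set V)) :
    ∀ j i, i ≠ j →
      (A (x j) (x i) ↔ A (y i) (x j)) ∧
      (A (x j) (y i) ↔ A (x i) (x j)) ∧
      (A (y j) (x i) ↔ A (y i) (y j)) ∧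
      (A (y j) (y i) ↔ A (x i) (y j)) := by
  classical
  obtain ⟨hk, hmiss, hdisj, hlose⟩ := hC
  haveI : NeZero k := ⟨by omega⟩
  have hab : ∀ i, IsMissing A (a i) (b i) := fun i => (hmiss i).1
  have hbc : ∀ i, IsMissing A (b i) (c i) := fun i => (hmiss i).2.1
  have hac : ∀ i, a i ≠ c i := fun i => (hmiss i).2.2
  have hsymm : ∀ {u v : V}, IsMissing A u v → IsMissing A v u :=
    fun h => ⟨h.1.symm, h.2.2, h.2.1⟩
  -- degrees of path vertices
  have hdeg : ∀ i, mdeg A (b i) = 2 ∧ mdeg A (a i) = 1 ∧ mdeg A (c i) = 1 := by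
    intro i
    have hb2 : mdeg A (b i) ≠ 1 := by
      intro h
      obtain ⟨z, hz⟩ := Set.ncard_eq_one.mp h
      have hA1 : a i ∈ {w | IsMissing A (b i) w} := hsymm (hab i)
      have hC1 : c i ∈ {w | IsMissing A (b i) w} := hbc i
      rw [hz] at hA1 hC1
      exact hac i (hA1.trans hC1.symm)
    rcases hP _ _ (hab i) with ⟨ha, hb⟩ | ⟨ha, hb⟩
    · rcases hP _ _ (hbc i) with ⟨hb', hc⟩ | ⟨hb', hc⟩
      · exact absurd hb' hb2
      · exact ⟨hb', ha, hc⟩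
    · exact absurd hb hb2
  -- missing neighbors stay within the path
  have hwithin : ∀ i u, (u = a i ∨ u = b i ∨ u = c i) → ∀ w, IsMissing A u w →
      (w = a i ∨ w = b i ∨ w = c i) := by
    intro i u hu w hw
    obtain ⟨hb2, ha1, hc1⟩ := hdeg i
    rcases hu with rfl | rfl | rfl
    · obtain ⟨z, hz⟩ := Set.ncard_eq_one.mp ha1
      have hbmem : b i ∈ {w | IsMissing A (a i) w} := hab i
      have hwmem : w ∈ {w | IsMissing A (a i) w} := hw
      rw [hz] at hbmem hwmem
      exact Or.inr (Or.inl (hwmem.trans hbmem.symm))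
    · obtain ⟨p, q, hpq, hs⟩ := Set.ncard_eq_two.mp hb2
      have hamem : a i ∈ {w | IsMissing A (b i) w} := hsymm (hab i)
      have hcmem : c i ∈ {w | IsMissing A (b i) w} := hbc i
      have hwmem : w ∈ {w | IsMissing A (b i) w} := hw
      rw [hs] at hamem hcmem hwmem
      simp only [Set.mem_insert_iff, Set.mem_singleton_iff] at hamem hcmem hwmem
      rcases hamem with rfl | rfl
      · rcases hcmem with h | rfl
        · exact absurd h.symm (hac i)
        · rcases hwmem with rfl | rfl
          · exact Or.inl rfl
          · exact Or.inr (Or.inr rfl)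
      · rcases hcmem with rfl | h
        · rcases hwmem with rfl | rfl
          · exact Or.inr (Or.inr rfl)
          · exact Or.inl rfl
        · exact absurd h.symm (hac i)
    · obtain ⟨z, hz⟩ := Set.ncard_eq_one.mp hc1
      have hbmem : b i ∈ {w | IsMissing A (c i) w} := hsymm (hbc i)
      have hwmem : w ∈ {w | IsMissing A (c i) w} := hw
      rw [hz] at hbmem hwmem
      exact Or.inr (Or.inl (hwmem.trans hbmem.symm))
  -- cross-path totality
  have hcross : ∀ i' j', i' ≠ j' → ∀ u w, (u = a i' ∨ u = b i' ∨ u = c i') →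
      (w = a j' ∨ w = b j' ∨ w = c j') → u ≠ w ∧ (A u w ∨ A w u) := by
    intro i' j' hne u w hu hw
    have hd := hdisj i' j' hne
    have huS : u ∈ ({a i', b i', c i'} : Set V) := by
      rcases hu with rfl | rfl | rfl <;> simp
    have hwS : w ∈ ({a j', b j', c j'} : Set V) := by
      rcases hw with rfl | rfl | rfl <;> simp
    have hneq : u ≠ w := by
      intro h
      exact Set.disjoint_left.mp hd huS (h ▸ hwS)
    refine ⟨hneq, ?_⟩
    by_contra hcon
    push_neg at hcon
    have hm : IsMissing A u w := ⟨hneq, hcon.1, hcon.2⟩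
    have hwi : w ∈ ({a i', b i', c i'} : Set V) := by
      rcases hwithin i' u hu w hm with rfl | rfl | rfl <;> simp
    exact Set.disjoint_left.mp hd hwi hwS
  -- resolve the selection
  have hxy : ∀ i', (x i' = a i' ∧ y i' = b i') ∨ (x i' = b i' ∧ y i' = a i') ∨
      (x i' = b i' ∧ y i' = c i') ∨ (x i' = c i' ∧ y i' = b i') := by
    intro i'
    rcases hsel i' with h | h <;> rw [Set.pair_eq_pair_iff] at h
    · rcases h with ⟨h1, h2⟩ | ⟨h1, h2⟩
      · exact Or.inl ⟨h1, h2⟩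
      · exact Or.inr (Or.inl ⟨h1, h2⟩)
    · rcases h with ⟨h1, h2⟩ | ⟨h1, h2⟩
      · exact Or.inr (Or.inr (Or.inl ⟨h1, h2⟩))
      · exact Or.inr (Or.inr (Or.inr ⟨h1, h2⟩))
  have hxon : ∀ i', x i' = a i' ∨ x i' = b i' ∨ x i' = c i' := by
    intro i'; rcases hxy i' with ⟨h, _⟩ | ⟨h, _⟩ | ⟨h, _⟩ | ⟨h, _⟩ <;> simp [h]
  have hyon : ∀ i', y i' = a i' ∨ y i' = b i' ∨ y i' = c i' := by
    intro i'; rcases hxy i' with ⟨_, h⟩ | ⟨_, h⟩ | ⟨_, h⟩ | ⟨_, h⟩ <;> simp [h]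
  -- symmetry of Loses
  have hsw1 : ∀ u v p q : V, Loses A u v p q → Loses A v u p q := by
    rintro u v p q (⟨l1, l2, l3, l4, l5, l6⟩ | ⟨l1, l2, l3, l4, l5, l6⟩)
    · exact Or.inr ⟨l2, l1, l5, l6, l3, l4⟩
    · exact Or.inl ⟨l2, l1, l5, l6, l3, l4⟩
  have hsw2 : ∀ u v p q : V, Loses A u v p q → Loses A u v q p := fun u v p q h => h.symm
  -- the selected edges lose along the cycle
  have hlosexy : ∀ i', Loses A (x i') (y i') (x (i' + 1)) (y (i' + 1)) := by
    intro i'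
    obtain ⟨L1, L2, L3, L4⟩ := hlose i'
    rcases hxy i' with ⟨e1, e2⟩ | ⟨e1, e2⟩ | ⟨e1, e2⟩ | ⟨e1, e2⟩ <;>
      rcases hxy (i' + 1) with ⟨f1, f2⟩ | ⟨f1, f2⟩ | ⟨f1, f2⟩ | ⟨f1, f2⟩ <;>
      rw [e1, e2, f1, f2] <;>
      first
        | exact L1 | exact L2 | exact L3 | exact L4
        | exact hsw1 _ _ _ _ L1 | exact hsw1 _ _ _ _ L2
        | exact hsw1 _ _ _ _ L3 | exact hsw1 _ _ _ _ L4
        | exact hsw2 _ _ _ _ L1 | exact hsw2 _ _ _ _ L2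
        | exact hsw2 _ _ _ _ L3 | exact hsw2 _ _ _ _ L4
        | exact hsw1 _ _ _ _ (hsw2 _ _ _ _ L1) | exact hsw1 _ _ _ _ (hsw2 _ _ _ _ L2)
        | exact hsw1 _ _ _ _ (hsw2 _ _ _ _ L3) | exact hsw1 _ _ _ _ (hsw2 _ _ _ _ L4)
  -- ZMod facts
  have hne0 : ∀ n : ℕ, 0 < n → n < k → ((n : ℕ) : ZMod k) ≠ 0 := by
    intro n h1 h2 h
    have hv := ZMod.val_cast_of_lt (n := k) h2
    rw [h, ZMod.val_zero] at hv
    omega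
  have hone : (1 : ZMod k) ≠ 0 := by
    have := hne0 1 (by omega) (by omega)
    rwa [Nat.cast_one] at this
  intro j i hij
  -- x j / y j lie on path j
  have hvon : ∀ v : V, (v = x j ∨ v = y j) → (v = a j ∨ v = b j ∨ v = c j) := by
    rintro v (rfl | rfl)
    · exact hxon j
    · exact hyon j
  -- Lemma A: no vertex of pair j dominates both members of another pair
  have lemA : ∀ n : ℕ, 0 < n → n < k → ∀ v, (v = x j ∨ v = y j) →
      ¬ (A v (x (j + (n : ZMod k))) ∧ A v (y (j + (n : ZMod k)))) := by
    intro n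
    induction n with
    | zero => exact fun h => absurd h (by omega)
    | succ m ih =>
      intro _ hlt v hv hcontra
      obtain ⟨h1, h2⟩ := hcontra
      have e : j + ((m + 1 : ℕ) : ZMod k) = (j + (m : ZMod k)) + 1 := by push_cast; ring
      rw [e] at h1 h2
      set m' := j + (m : ZMod k) with hm'def
      rcases Nat.eq_zero_or_pos m with hm | hm
      · have hmj : m' = j := by rw [hm'def, hm]; simp
        rw [hmj] at h1 h2
        rcases hlosexy j with ⟨l1, l2, l3, l4, l5, l6⟩ | ⟨l1, l2, l3, l4, l5, l6⟩ <;>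
          rcases hv with rfl | rfl
        · exact l3 h2
        · exact l5 h1
        · exact l3 h1
        · exact l5 h2
      · have hmj : m' ≠ j := by
          rw [hm'def]
          intro h
          exact hne0 m hm (by omega) (add_eq_left.mp h)
        have hm1 : m' ≠ m' + 1 := fun h => hone (left_eq_add.mp h)
        have hvm : v = a j ∨ v = b j ∨ v = c j := hvon v hv
        rcases hlosexy m' with ⟨l1, l2, l3, l4, l5, l6⟩ | ⟨l1, l2, l3, l4, l5, l6⟩
        · have hnx : ¬ A (x m') v := fun hw =>
            l4 ⟨(hcross m' (m' + 1) hm1 (x m') (y (m' + 1)) (hxon m') (hyon (m' + 1))).1.symm,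
              l3, v, hw, h2⟩
          have hny : ¬ A (y m') v := fun hw =>
            l6 ⟨(hcross m' (m' + 1) hm1 (y m') (x (m' + 1)) (hyon m') (hxon (m' + 1))).1.symm,
              l5, v, hw, h1⟩
          have hvx : A v (x m') := by
            rcases (hcross j m' (Ne.symm hmj) v (x m') hvm (hxon m')).2 with h | h
            · exact h
            · exact absurd h hnx
          have hvy : A v (y m') := by
            rcases (hcross j m' (Ne.symm hmj) v (y m') hvm (hyon m')).2 with h | h
            · exact h
            · exact absurd h hny
          exact ih hm (by omega) v hv ⟨hvx, hvy⟩
        · have hnx : ¬ A (x m') v := fun hw =>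
            l4 ⟨(hcross m' (m' + 1) hm1 (x m') (x (m' + 1)) (hxon m') (hxon (m' + 1))).1.symm,
              l3, v, hw, h1⟩
          have hny : ¬ A (y m') v := fun hw =>
            l6 ⟨(hcross m' (m' + 1) hm1 (y m') (y (m' + 1)) (hyon m') (hyon (m' + 1))).1.symm,
              l5, v, hw, h2⟩
          have hvx : A v (x m') := by
            rcases (hcross j m' (Ne.symm hmj) v (x m') hvm (hxon m')).2 with h | h
            · exact h
            · exact absurd h hnx
          have hvy : A v (y m') := by
            rcases (hcross j m' (Ne.symm hmj) v (y m') hvm (hyon m')).2 with h | h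
            · exact h
            · exact absurd h hny
          exact ih hm (by omega) v hv ⟨hvx, hvy⟩
  -- Lemma B: no vertex of pair j is dominated by both members of another pair
  have lemB : ∀ n : ℕ, 0 < n → n < k → ∀ v, (v = x j ∨ v = y j) →
      ¬ (A (x (j - (n : ZMod k))) v ∧ A (y (j - (n : ZMod k))) v) := by
    intro n
    induction n with
    | zero => exact fun h => absurd h (by omega)
    | succ m ih =>
      intro _ hlt v hv hcontra
      obtain ⟨h1, h2⟩ := hcontra
      set m' := j - ((m + 1 : ℕ) : ZMod k) with hm'def
      have e : m' + 1 = j - (m : ZMod k) := by rw [hm'def]; push_cast; ring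
      rcases Nat.eq_zero_or_pos m with hm | hm
      · have hmj : m' + 1 = j := by rw [e, hm]; simp
        rcases hlosexy m' with ⟨l1, l2, l3, l4, l5, l6⟩ | ⟨l1, l2, l3, l4, l5, l6⟩ <;>
          rw [hmj] at l1 l2 l3 l4 l5 l6 <;> rcases hv with rfl | rfl
        · exact l5 h2
        · exact l3 h1
        · exact l3 h1
        · exact l5 h2
      · have hmj : m' + 1 ≠ j := by
          rw [e]
          intro h
          exact hne0 m hm (by omega) (sub_eq_self.mp h)
        have hm1 : m' ≠ m' + 1 := fun h => hone (left_eq_add.mp h)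
        have hvm : v = a j ∨ v = b j ∨ v = c j := hvon v hv
        rcases hlosexy m' with ⟨l1, l2, l3, l4, l5, l6⟩ | ⟨l1, l2, l3, l4, l5, l6⟩
        · have hnx : ¬ A v (y (m' + 1)) := fun hw =>
            l4 ⟨(hcross m' (m' + 1) hm1 (x m') (y (m' + 1)) (hxon m') (hyon (m' + 1))).1.symm,
              l3, v, h1, hw⟩
          have hny : ¬ A v (x (m' + 1)) := fun hw =>
            l6 ⟨(hcross m' (m' + 1) hm1 (y m') (x (m' + 1)) (hyon m') (hxon (m' + 1))).1.symm,
              l5, v, h2, hw⟩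
          have hvx : A (x (m' + 1)) v := by
            rcases (hcross (m' + 1) j hmj (x (m' + 1)) v (hxon (m' + 1)) hvm).2 with h | h
            · exact h
            · exact absurd h hny
          have hvy : A (y (m' + 1)) v := by
            rcases (hcross (m' + 1) j hmj (y (m' + 1)) v (hyon (m' + 1)) hvm).2 with h | h
            · exact h
            · exact absurd h hnx
          rw [e] at hvx hvy
          exact ih hm (by omega) v hv ⟨hvx, hvy⟩
        · have hnx : ¬ A v (x (m' + 1)) := fun hw =>
            l4 ⟨(hcross m' (m' + 1) hm1 (x m') (x (m' + 1)) (hxon m') (hxon (m' + 1))).1.symm,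
              l3, v, h1, hw⟩
          have hny : ¬ A v (y (m' + 1)) := fun hw =>
            l6 ⟨(hcross m' (m' + 1) hm1 (y m') (y (m' + 1)) (hyon m') (hyon (m' + 1))).1.symm,
              l5, v, h2, hw⟩
          have hvx : A (x (m' + 1)) v := by
            rcases (hcross (m' + 1) j hmj (x (m' + 1)) v (hxon (m' + 1)) hvm).2 with h | h
            · exact h
            · exact absurd h hnx
          have hvy : A (y (m' + 1)) v := by
            rcases (hcross (m' + 1) j hmj (y (m' + 1)) v (hyon (m' + 1)) hvm).2 with h | h
            · exact h
            · exact absurd h hny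
          rw [e] at hvx hvy
          exact ih hm (by omega) v hv ⟨hvx, hvy⟩
  -- specialize to i
  have hij' : i - j ≠ 0 := sub_ne_zero_of_ne hij
  have hji' : j - i ≠ 0 := sub_ne_zero_of_ne (Ne.symm hij)
  have hcA : (((i - j).val : ℕ) : ZMod k) = i - j := ZMod.natCast_rightInverse _
  have hcB : (((j - i).val : ℕ) : ZMod k) = j - i := ZMod.natCast_rightInverse _
  have hposA : 0 < (i - j).val := by
    rcases Nat.eq_zero_or_pos (i - j).val with h | h
    · rw [h, Nat.cast_zero] at hcA
      exact absurd hcA.symm hij'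
    · exact h
  have hposB : 0 < (j - i).val := by
    rcases Nat.eq_zero_or_pos (j - i).val with h | h
    · rw [h, Nat.cast_zero] at hcB
      exact absurd hcB.symm hji'
    · exact h
  have eA : j + (((i - j).val : ℕ) : ZMod k) = i := by rw [hcA]; ring
  have eB : j - (((j - i).val : ℕ) : ZMod k) = i := by rw [hcB]; ring
  have HA1 := lemA (i - j).val hposA (ZMod.val_lt _) (x j) (Or.inl rfl)
  have HA2 := lemA (i - j).val hposA (ZMod.val_lt _) (y j) (Or.inr rfl)
  have HB1 := lemB (j - i).val hposB (ZMod.val_lt _) (x j) (Or.inl rfl)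
  have HB2 := lemB (j - i).val hposB (ZMod.val_lt _) (y j) (Or.inr rfl)
  rw [eA] at HA1 HA2
  rw [eB] at HB1 HB2
  have t1 : A (x j) (x i) ∨ A (x i) (x j) :=
    (hcross j i (Ne.symm hij) (x j) (x i) (hxon j) (hxon i)).2
  have t2 : A (x j) (y i) ∨ A (y i) (x j) :=
    (hcross j i (Ne.symm hij) (x j) (y i) (hxon j) (hyon i)).2
  have t3 : A (y j) (x i) ∨ A (x i) (y j) :=
    (hcross j i (Ne.symm hij) (y j) (x i) (hyon j) (hxon i)).2
  have t4 : A (y j) (y i) ∨ A (y i) (y j) :=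
    (hcross j i (Ne.symm hij) (y j) (y i) (hyon j) (hyon i)).2
  refine ⟨⟨?_, ?_⟩, ⟨?_, ?_⟩, ⟨?_, ?_⟩, ⟨?_, ?_⟩⟩
  · intro h
    rcases t2 with h2 | h2
    · exact absurd ⟨h, h2⟩ HA1
    · exact h2
  · intro h
    rcases t1 with h1 | h1
    · exact h1
    · exact absurd ⟨h1, h⟩ HB1
  · intro h
    rcases t1 with h1 | h1
    · exact absurd ⟨h1, h⟩ HA1
    · exact h1
  · intro h
    rcases t2 with h2 | h2
    · exact h2
    · exact absurd ⟨h, h2⟩ HB1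
  · intro h
    rcases t4 with h4 | h4
    · exact absurd ⟨h, h4⟩ HA2
    · exact h4
  · intro h
    rcases t3 with h3 | h3
    · exact h3
    · exact absurd ⟨h3, h⟩ HB2
  · intro h
    rcases t3 with h3 | h3
    · exact absurd ⟨h3, h⟩ HA2
    · exact h3
  · intro h
    rcases t4 with h4 | h4
    · exact h4
    · exact absurd ⟨h, h4⟩ HB2

end SSNC
end

section
/- Let D be a tournament missing disjoint paths of length 2 and let C = a_1b_1c_1, …, a_kb_kc_k be a double cycle in Δ(D). Then for every i ∈ {1,…,k}, in the induced subdigraph D[K(C)]: N⁺(a_i) ∖ {c_i} = N⁺(c_i) ∖ {a_i} and N⁻(a_i) ∖ {c_i} = N⁻(c_i) ∖ {a_i}. -/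
namespace SSNC

variable {V : Type*}

section Lemma48

variable {V : Type*} {k : ℕ}

/-- `q` is not an out-neighbor of any out-neighbor of `p`. -/
def Cond (A : V → V → Prop) (p q : V) : Prop := ∀ w, A p w → ¬ A w q

lemma cond_of {A : V → V → Prop} {p q : V} (hne : q ≠ p) (hnA : ¬ A p q)
    (hSO : ¬ SecondOut A p q) : Cond A p q :=
  fun w h1 h2 => hSO ⟨hne, hnA, ⟨w, h1, h2⟩⟩

/-- Type-1 pattern of arcs from path `m` into path `n`. -/
def InP1 (A : V → V → Prop) (a b c : ZMod k → V) (n m : ZMod k) : Prop :=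
  A (b m) (a n) ∧ A (b m) (c n) ∧ A (a m) (b n) ∧ A (c m) (b n)

/-- Type-0 pattern of arcs from path `m` into path `n`. -/
def InP0 (A : V → V → Prop) (a b c : ZMod k → V) (n m : ZMod k) : Prop :=
  A (a m) (a n) ∧ A (c m) (a n) ∧ A (a m) (c n) ∧ A (c m) (c n) ∧ A (b m) (b n)

/-- Mode 1 of the losing relations from path `n` to path `n+1`. -/
def Mode1 (A : V → V → Prop) (a b c : ZMod k → V) (n : ZMod k) : Prop :=
  Cond A (a n) (b (n+1)) ∧ Cond A (c n) (b (n+1)) ∧ Cond A (b n) (a (n+1)) ∧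
    Cond A (b n) (c (n+1)) ∧ InP1 A a b c n (n+1)

/-- Mode 2 of the losing relations from path `n` to path `n+1`. -/
def Mode2 (A : V → V → Prop) (a b c : ZMod k → V) (n : ZMod k) : Prop :=
  Cond A (a n) (a (n+1)) ∧ Cond A (a n) (c (n+1)) ∧ Cond A (c n) (a (n+1)) ∧
    Cond A (c n) (c (n+1)) ∧ Cond A (b n) (b (n+1)) ∧ InP0 A a b c n (n+1)

end Lemma48


/-- Lemma 4.8: `aᵢ` and `cᵢ` have the same first neighborhoods in `D[K(C)]`,
apart from one another. -/
theorem stmt7 {V : Type*} [Fintype V] (A : V → V → Prop) (hA : Oriented A)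
    (hP : MissingPaths2 A) (k : ℕ) (a b c : ZMod k → V)
    (hC : IsDoubleCycle A k a b c) (K : Set V) (hK : K = Kset a b c) :
    ∀ i, outIn A K (a i) \ {c i} = outIn A K (c i) \ {a i} ∧
         inIn A K (a i) \ {c i} = inIn A K (c i) \ {a i} := by
  subst hK
  obtain ⟨hk2, hM, hD, hL⟩ := hC
  haveI : NeZero k := ⟨by omega⟩
  have hirr : ∀ v, ¬ A v v := fun v h => hA v v h h
  -- vertices in distinct paths are distinct
  have hdisj : ∀ i j : ZMod k, i ≠ j → ∀ u v : V,
      (u = a i ∨ u = b i ∨ u = c i) → (v = a j ∨ v = b j ∨ v = c j) → u ≠ v := by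
    intro i j hij u v hu hv heq
    have h1 : u ∈ ({a i, b i, c i} : Set V) := by
      simp only [Set.mem_insert_iff, Set.mem_singleton_iff]; exact hu
    have h2 : u ∈ ({a j, b j, c j} : Set V) := by
      simp only [Set.mem_insert_iff, Set.mem_singleton_iff]; rw [heq]; exact hv
    exact Set.disjoint_left.mp (hD i j hij) h1 h2
  -- missing partners are inside each path
  have hpart : ∀ i : ZMod k, (∀ w, IsMissing A (a i) w → w = b i) ∧
      (∀ w, IsMissing A (b i) w → w = a i ∨ w = c i) ∧
      (∀ w, IsMissing A (c i) w → w = b i) := by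
    intro i
    obtain ⟨hab, hbc, hac⟩ := hM i
    have hba : IsMissing A (b i) (a i) := ⟨hab.1.symm, hab.2.2, hab.2.1⟩
    have hcb : IsMissing A (c i) (b i) := ⟨hbc.1.symm, hbc.2.2, hbc.2.1⟩
    have hsub : ({a i, c i} : Set V) ⊆ {w | IsMissing A (b i) w} := by
      rintro w (rfl | rfl)
      · exact hba
      · exact hbc
    have h2le : 2 ≤ mdeg A (b i) := by
      rw [mdeg, ← Set.ncard_pair hac]
      exact Set.ncard_le_ncard hsub (Set.toFinite _)
    have hb2 : mdeg A (b i) = 2 := by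
      rcases hP (a i) (b i) hab with ⟨_, h⟩ | ⟨_, h⟩
      · exact h
      · omega
    have ha1 : mdeg A (a i) = 1 := by
      rcases hP (a i) (b i) hab with ⟨h, _⟩ | ⟨_, h⟩
      · exact h
      · omega
    have hc1 : mdeg A (c i) = 1 := by
      rcases hP (b i) (c i) hbc with ⟨h, _⟩ | ⟨_, h⟩
      · omega
      · exact h
    have hbset : {w | IsMissing A (b i) w} = ({a i, c i} : Set V) :=
      (Set.eq_of_subset_of_ncard_le hsub
        (by rw [Set.ncard_pair hac]; exact le_of_eq hb2) (Set.toFinite _)).symm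
    have haset : ∀ w, IsMissing A (a i) w → w = b i := by
      intro w hw
      obtain ⟨t, ht⟩ := Set.ncard_eq_one.mp ha1
      have h1 : (b i) ∈ {w | IsMissing A (a i) w} := hab
      have h2 : w ∈ {w | IsMissing A (a i) w} := hw
      rw [ht] at h1 h2
      rw [Set.mem_singleton_iff] at h1 h2
      rw [← h1] at h2; exact h2
    have hcset : ∀ w, IsMissing A (c i) w → w = b i := by
      intro w hw
      obtain ⟨t, ht⟩ := Set.ncard_eq_one.mp hc1
      have h1 : (b i) ∈ {w | IsMissing A (c i) w} := hcb
      have h2 : w ∈ {w | IsMissing A (c i) w} := hw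
      rw [ht] at h1 h2
      rw [Set.mem_singleton_iff] at h1 h2
      rw [← h1] at h2; exact h2
    refine ⟨haset, ?_, hcset⟩
    intro w hw
    have : w ∈ ({a i, c i} : Set V) := by rw [← hbset]; exact hw
    simpa using this
  -- vertices in distinct paths are joined by an arc
  have hcross : ∀ i j : ZMod k, i ≠ j → ∀ u v : V,
      (u = a i ∨ u = b i ∨ u = c i) → (v = a j ∨ v = b j ∨ v = c j) →
      ¬ A u v → A v u := by
    intro i j hij u v hu hv hnA
    by_contra hnA'
    have hmiss : IsMissing A u v := ⟨hdisj i j hij u v hu hv, hnA, hnA'⟩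
    obtain ⟨hpa, hpb, hpc⟩ := hpart i
    have hvin : v = a i ∨ v = b i ∨ v = c i := by
      rcases hu with rfl | rfl | rfl
      · exact Or.inr (Or.inl (hpa v hmiss))
      · rcases hpb v hmiss with h | h
        · exact Or.inl h
        · exact Or.inr (Or.inr h)
      · exact Or.inr (Or.inl (hpc v hmiss))
    exact hdisj i j hij v v hvin hv rfl
  -- consecutive indices differ
  have hsucc : ∀ n : ZMod k, n ≠ n + 1 := by
    intro n h
    have h1 : ((1 : ℕ) : ZMod k) = 0 := by
      push_cast
      linear_combination -h
    rw [ZMod.natCast_eq_zero_iff] at h1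
    have := Nat.le_of_dvd one_pos h1
    omega
  -- each consecutive pair of paths is in Mode 1 or Mode 2
  have hMode : ∀ n : ZMod k, Mode1 A a b c n ∨ Mode2 A a b c n := by
    intro n
    have hne : ∀ u v : V, (u = a n ∨ u = b n ∨ u = c n) →
        (v = a (n+1) ∨ v = b (n+1) ∨ v = c (n+1)) → v ≠ u :=
      fun u v hu hv => (hdisj n (n+1) (hsucc n) u v hu hv).symm
    obtain ⟨L1, L2, L3, L4⟩ := hL n
    have hcr : ∀ u v : V, (u = a n ∨ u = b n ∨ u = c n) →
        (v = a (n+1) ∨ v = b (n+1) ∨ v = c (n+1)) → ¬ A u v → A v u :=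
      hcross n (n+1) (hsucc n)
    rcases L1 with ⟨hpx, hqy, hpy, hSpy, hqx, hSqx⟩ | ⟨hpy, hqx, hpx, hSpx, hqy, hSqy⟩
    · -- Mode 1
      left
      have h2 : LosesOrd A (a n) (b n) (c (n+1)) (b (n+1)) := by
        rcases L2 with h | h
        · exact absurd h.1 hpy
        · exact h
      obtain ⟨hpz, -, -, -, hqz, hSqz⟩ := h2
      have h3 : LosesOrd A (b n) (c n) (b (n+1)) (a (n+1)) := by
        rcases L3 with h | h
        · exact absurd h.1 hqx
        · exact h
      obtain ⟨-, hrx, -, -, hry, hSry⟩ := h3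
      refine ⟨cond_of (hne _ _ (Or.inl rfl) (Or.inr (Or.inl rfl))) hpy hSpy,
        cond_of (hne _ _ (Or.inr (Or.inr rfl)) (Or.inr (Or.inl rfl))) hry hSry,
        cond_of (hne _ _ (Or.inr (Or.inl rfl)) (Or.inl rfl)) hqx hSqx,
        cond_of (hne _ _ (Or.inr (Or.inl rfl)) (Or.inr (Or.inr rfl))) hqz hSqz,
        hcr _ _ (Or.inl rfl) (Or.inr (Or.inl rfl)) hpy,
        hcr _ _ (Or.inr (Or.inr rfl)) (Or.inr (Or.inl rfl)) hry,
        hcr _ _ (Or.inr (Or.inl rfl)) (Or.inl rfl) hqx,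
        hcr _ _ (Or.inr (Or.inl rfl)) (Or.inr (Or.inr rfl)) hqz⟩
    · -- Mode 2
      right
      have h2 : LosesOrd A (a n) (b n) (b (n+1)) (c (n+1)) := by
        rcases L2 with h | h
        · exact h
        · exact absurd h.2.1 hqy
      obtain ⟨-, -, hpz, hSpz, -, -⟩ := h2
      have h3 : LosesOrd A (b n) (c n) (a (n+1)) (b (n+1)) := by
        rcases L3 with h | h
        · exact h
        · exact absurd h.1 hqy
      obtain ⟨-, -, -, -, hrx, hSrx⟩ := h3
      have h4 : LosesOrd A (b n) (c n) (c (n+1)) (b (n+1)) := by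
        rcases L4 with h | h
        · exact absurd h.1 hqy
        · exact h
      obtain ⟨-, -, -, -, hrz, hSrz⟩ := h4
      refine ⟨cond_of (hne _ _ (Or.inl rfl) (Or.inl rfl)) hpx hSpx,
        cond_of (hne _ _ (Or.inl rfl) (Or.inr (Or.inr rfl))) hpz hSpz,
        cond_of (hne _ _ (Or.inr (Or.inr rfl)) (Or.inl rfl)) hrx hSrx,
        cond_of (hne _ _ (Or.inr (Or.inr rfl)) (Or.inr (Or.inr rfl))) hrz hSrz,
        cond_of (hne _ _ (Or.inr (Or.inl rfl)) (Or.inr (Or.inl rfl))) hqy hSqy,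
        hcr _ _ (Or.inl rfl) (Or.inl rfl) hpx,
        hcr _ _ (Or.inl rfl) (Or.inr (Or.inr rfl)) hpz,
        hcr _ _ (Or.inr (Or.inr rfl)) (Or.inl rfl) hrx,
        hcr _ _ (Or.inr (Or.inr rfl)) (Or.inr (Or.inr rfl)) hrz,
        hcr _ _ (Or.inr (Or.inl rfl)) (Or.inr (Or.inl rfl)) hqy⟩
  -- the propagation step
  have hstep : ∀ n m : ZMod k, n ≠ m →
      (InP1 A a b c (n+1) m ∨ InP0 A a b c (n+1) m) →
      InP1 A a b c n m ∨ InP0 A a b c n m := by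
    intro n m hnm hprev
    have hcr : ∀ u v : V, (u = a n ∨ u = b n ∨ u = c n) →
        (v = a m ∨ v = b m ∨ v = c m) → ¬ A u v → A v u := hcross n m hnm
    rcases hMode n with ⟨C1, C2, C3, C4, -⟩ | ⟨C1, C2, C3, C4, C5, -⟩
    · -- Mode 1 at n
      rcases hprev with ⟨h1, h2, h3, h4⟩ | ⟨g1, g2, g3, g4, g5⟩
      · right
        exact ⟨hcr _ _ (Or.inl rfl) (Or.inl rfl) (fun h => C1 _ h h3),
          hcr _ _ (Or.inl rfl) (Or.inr (Or.inr rfl)) (fun h => C1 _ h h4),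
          hcr _ _ (Or.inr (Or.inr rfl)) (Or.inl rfl) (fun h => C2 _ h h3),
          hcr _ _ (Or.inr (Or.inr rfl)) (Or.inr (Or.inr rfl)) (fun h => C2 _ h h4),
          hcr _ _ (Or.inr (Or.inl rfl)) (Or.inr (Or.inl rfl)) (fun h => C3 _ h h1)⟩
      · left
        exact ⟨hcr _ _ (Or.inl rfl) (Or.inr (Or.inl rfl)) (fun h => C1 _ h g5),
          hcr _ _ (Or.inr (Or.inr rfl)) (Or.inr (Or.inl rfl)) (fun h => C2 _ h g5),
          hcr _ _ (Or.inr (Or.inl rfl)) (Or.inl rfl) (fun h => C3 _ h g1),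
          hcr _ _ (Or.inr (Or.inl rfl)) (Or.inr (Or.inr rfl)) (fun h => C3 _ h g2)⟩
    · -- Mode 2 at n
      rcases hprev with ⟨h1, h2, h3, h4⟩ | ⟨g1, g2, g3, g4, g5⟩
      · left
        exact ⟨hcr _ _ (Or.inl rfl) (Or.inr (Or.inl rfl)) (fun h => C1 _ h h1),
          hcr _ _ (Or.inr (Or.inr rfl)) (Or.inr (Or.inl rfl)) (fun h => C3 _ h h1),
          hcr _ _ (Or.inr (Or.inl rfl)) (Or.inl rfl) (fun h => C5 _ h h3),
          hcr _ _ (Or.inr (Or.inl rfl)) (Or.inr (Or.inr rfl)) (fun h => C5 _ h h4)⟩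
      · right
        exact ⟨hcr _ _ (Or.inl rfl) (Or.inl rfl) (fun h => C1 _ h g1),
          hcr _ _ (Or.inl rfl) (Or.inr (Or.inr rfl)) (fun h => C1 _ h g2),
          hcr _ _ (Or.inr (Or.inr rfl)) (Or.inl rfl) (fun h => C3 _ h g1),
          hcr _ _ (Or.inr (Or.inr rfl)) (Or.inr (Or.inr rfl)) (fun h => C3 _ h g2),
          hcr _ _ (Or.inr (Or.inl rfl)) (Or.inr (Or.inl rfl)) (fun h => C5 _ h g5)⟩
  -- base case: between consecutive paths
  have hbase : ∀ m : ZMod k, InP1 A a b c (m - 1) m ∨ InP0 A a b c (m - 1) m := by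
    intro m
    have e : (m - 1) + 1 = m := by ring
    rcases hMode (m - 1) with ⟨-, -, -, -, h⟩ | ⟨-, -, -, -, -, h⟩
    · left; rw [e] at h; exact h
    · right; rw [e] at h; exact h
  -- the pattern holds between any two distinct paths
  have hInAll : ∀ n m : ZMod k, n ≠ m →
      InP1 A a b c n m ∨ InP0 A a b c n m := by
    have key : ∀ d : ℕ, d ≤ k - 2 → ∀ m : ZMod k,
        InP1 A a b c (m - 1 - (d : ZMod k)) m ∨ InP0 A a b c (m - 1 - (d : ZMod k)) m := by
      intro d
      induction d with
      | zero => intro _ m; simpa using hbase m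
      | succ d ih =>
        intro hd m
        have h1 := ih (by omega) m
        have hnm : m - 1 - ((d + 1 : ℕ) : ZMod k) ≠ m := by
          intro h
          have h2 : ((d + 2 : ℕ) : ZMod k) = 0 := by
            push_cast at h ⊢
            linear_combination -h
          rw [ZMod.natCast_eq_zero_iff] at h2
          have := Nat.le_of_dvd (by omega) h2
          omega
        have e : (m - 1 - ((d + 1 : ℕ) : ZMod k)) + 1 = m - 1 - (d : ZMod k) := by
          push_cast
          ring
        apply hstep _ m hnm
        rw [e]
        exact h1
    intro n m hnm
    have hval : ((m - 1 - n).val : ZMod k) = m - 1 - n := ZMod.natCast_zmod_val _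
    have hlt : (m - 1 - n).val < k := ZMod.val_lt _
    have hne' : (m - 1 - n).val ≠ k - 1 := by
      intro h
      have : m - 1 - n = ((k - 1 : ℕ) : ZMod k) := by rw [← hval, h]
      rw [Nat.cast_sub (by omega), ZMod.natCast_self, Nat.cast_one, zero_sub] at this
      apply hnm
      linear_combination -this
    have := key (m - 1 - n).val (by omega) m
    rw [hval] at this
    have e : m - 1 - (m - 1 - n) = n := by ring
    rw [e] at this
    exact this
  -- symmetry of a i and c i with respect to any vertex of another path
  have hsym : ∀ i j : ZMod k, i ≠ j → ∀ u : V, (u = a j ∨ u = b j ∨ u = c j) →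
      (A (a i) u ↔ A (c i) u) ∧ (A u (a i) ↔ A u (c i)) := by
    intro i j hij u hu
    have H1 := hInAll i j hij
    have H2 := hInAll j i (Ne.symm hij)
    rcases H1 with ⟨p1, p2, p3, p4⟩ | ⟨q1, q2, q3, q4, q5⟩
    · rcases H2 with ⟨r1, r2, r3, r4⟩ | ⟨s1, s2, s3, s4, s5⟩
      · exact absurd p1 (hA _ _ r3)
      · -- InP1 i j and InP0 j i
        rcases hu with rfl | rfl | rfl
        · exact ⟨iff_of_true s1 s2, iff_of_false (hA _ _ s1) (hA _ _ s2)⟩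
        · exact ⟨iff_of_false (hA _ _ p1) (hA _ _ p2), iff_of_true p1 p2⟩
        · exact ⟨iff_of_true s3 s4, iff_of_false (hA _ _ s3) (hA _ _ s4)⟩
    · rcases H2 with ⟨r1, r2, r3, r4⟩ | ⟨s1, s2, s3, s4, s5⟩
      · -- InP0 i j and InP1 j i
        rcases hu with rfl | rfl | rfl
        · exact ⟨iff_of_false (hA _ _ q1) (hA _ _ q3), iff_of_true q1 q3⟩
        · exact ⟨iff_of_true r3 r4, iff_of_false (hA _ _ r3) (hA _ _ r4)⟩
        · exact ⟨iff_of_false (hA _ _ q2) (hA _ _ q4), iff_of_true q2 q4⟩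
      · exact absurd q1 (hA _ _ s1)
  -- finish
  intro i
  obtain ⟨hab, hbc, hac⟩ := hM i
  have main : ∀ u : V, u ∈ Kset a b c →
      (A (a i) u → u ≠ c i → A (c i) u ∧ u ≠ a i) ∧
      (A (c i) u → u ≠ a i → A (a i) u ∧ u ≠ c i) ∧
      (A u (a i) → u ≠ c i → A u (c i) ∧ u ≠ a i) ∧
      (A u (c i) → u ≠ a i → A u (a i) ∧ u ≠ c i) := by
    intro u hu
    obtain ⟨j, hj⟩ := hu
    by_cases hij : i = j
    · subst hij
      rcases hj with rfl | rfl | rfl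
      · exact ⟨fun h _ => absurd h (hirr _), fun _ h => absurd rfl h,
          fun h _ => absurd h (hirr _), fun _ h => absurd rfl h⟩
      · exact ⟨fun h _ => absurd h hab.2.1, fun h _ => absurd h hbc.2.2,
          fun h _ => absurd h hab.2.2, fun h _ => absurd h hbc.2.1⟩
      · exact ⟨fun _ h => absurd rfl h, fun h _ => absurd h (hirr _),
          fun _ h => absurd rfl h, fun h _ => absurd h (hirr _)⟩
    · have hne_a : u ≠ a i :=
        hdisj j i (Ne.symm hij) u (a i) hj (Or.inl rfl)
      have hne_c : u ≠ c i :=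
        hdisj j i (Ne.symm hij) u (c i) hj (Or.inr (Or.inr rfl))
      obtain ⟨hfwd, hbwd⟩ := hsym i j hij u hj
      exact ⟨fun h _ => ⟨hfwd.mp h, hne_a⟩, fun h _ => ⟨hfwd.mpr h, hne_c⟩,
        fun h _ => ⟨hbwd.mp h, hne_a⟩, fun h _ => ⟨hbwd.mpr h, hne_c⟩⟩
  constructor
  · ext u
    simp only [Set.mem_diff, outIn, Set.mem_setOf_eq, Set.mem_singleton_iff]
    constructor
    · rintro ⟨⟨huK, hau⟩, hnec⟩
      obtain ⟨h1, -, -, -⟩ := main u huK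
      obtain ⟨h2, h3⟩ := h1 hau hnec
      exact ⟨⟨huK, h2⟩, h3⟩
    · rintro ⟨⟨huK, hcu⟩, hnea⟩
      obtain ⟨-, h1, -, -⟩ := main u huK
      obtain ⟨h2, h3⟩ := h1 hcu hnea
      exact ⟨⟨huK, h2⟩, h3⟩
  · ext u
    simp only [Set.mem_diff, inIn, Set.mem_setOf_eq, Set.mem_singleton_iff]
    constructor
    · rintro ⟨⟨huK, hau⟩, hnec⟩
      obtain ⟨-, -, h1, -⟩ := main u huK
      obtain ⟨h2, h3⟩ := h1 hau hnec
      exact ⟨⟨huK, h2⟩, h3⟩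
    · rintro ⟨⟨huK, hcu⟩, hnea⟩
      obtain ⟨-, -, -, h1⟩ := main u huK
      obtain ⟨h2, h3⟩ := h1 hcu hnea
      exact ⟨⟨huK, h2⟩, h3⟩

end SSNC
end

section
/- Let D be a tournament missing disjoint paths of length 2 and let C = a_1b_1c_1, …, a_kb_kc_k be a double cycle in Δ(D). Then for every i ∈ {1,…,k}, in the induced subdigraph D[K(C)]: N⁺⁺(a_i) = N⁺⁺(c_i) and N⁻⁻(a_i) = N⁻⁻(c_i). -/
namespace SSNC

variable {V : Type*}

/-! ### Auxiliary machinery for the proof of Lemma 4.9 -/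

section Aux

variable {k : ℕ}

/-- The `i`-th missing path, as a vertex set. -/
def Triple (a b c : ZMod k → V) (i : ZMod k) : Set V := {a i, b i, c i}

/-- The "sign" of the step from triple `i` to triple `i+1`:
`true` iff `b i → b (i+1)` (the aligned case). -/
noncomputable def sB (A : V → V → Prop) (b : ZMod k → V) (i : ZMod k) : Bool :=
  @decide (A (b i) (b (i+1))) (Classical.propDecidable _)

lemma sB_true_iff {A : V → V → Prop} {b : ZMod k → V} {i : ZMod k} :
    sB A b i = true ↔ A (b i) (b (i+1)) := by
  simp [sB, @decide_eq_true_iff _ (Classical.propDecidable _)]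

/-- The class of vertices of type `τ` in triple `i` (`true` = middle, `false` = ends). -/
def Tset (a b c : ZMod k → V) (τ : Bool) (i : ZMod k) : Set V :=
  if τ then {b i} else {a i, c i}

/-- Parity of the number of aligned steps among `p, p+1, …, p+n-1`. -/
noncomputable def par (A : V → V → Prop) (b : ZMod k → V) (p : ZMod k) : ℕ → Bool
  | 0 => false
  | n+1 => xor (par A b p n) (sB A b (p + (n : ℕ)))

/-- No directed path of length `≤ 2` from `s` to `t`. -/
def NoP (A : V → V → Prop) (s t : V) : Prop := ∀ w, A s w → ¬ A w t

lemma mkNoP {A : V → V → Prop} {s t : V} (hS : ¬ SecondOut A s t) (hne : t ≠ s)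
    (hst : ¬ A s t) : NoP A s t :=
  fun w h1 h2 => hS ⟨hne, hst, w, h1, h2⟩

variable (A : V → V → Prop) (a b c : ZMod k → V)

/-- Between distinct triples, every pair of vertices is joined by an arc. -/
def NoMissP : Prop := ∀ (i j : ZMod k) (u v : V), u ∈ Triple a b c i →
  v ∈ Triple a b c j → i ≠ j → ¬ A u v → A v u

/-- Complete description of the arcs between consecutive triples. -/
def StepP : Prop := ∀ i : ZMod k,
  (sB A b i = true ∧
    A (a i) (a (i+1)) ∧ A (a i) (c (i+1)) ∧ A (c i) (a (i+1)) ∧ A (c i) (c (i+1)) ∧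
    A (b i) (b (i+1)) ∧
    A (b (i+1)) (a i) ∧ A (b (i+1)) (c i) ∧ A (a (i+1)) (b i) ∧ A (c (i+1)) (b i) ∧
    NoP A (a i) (b (i+1)) ∧ NoP A (c i) (b (i+1)) ∧
    NoP A (b i) (a (i+1)) ∧ NoP A (b i) (c (i+1)))
  ∨
  (sB A b i = false ∧
    A (a i) (b (i+1)) ∧ A (c i) (b (i+1)) ∧ A (b i) (a (i+1)) ∧ A (b i) (c (i+1)) ∧
    A (b (i+1)) (b i) ∧
    A (a (i+1)) (a i) ∧ A (a (i+1)) (c i) ∧ A (c (i+1)) (a i) ∧ A (c (i+1)) (c i) ∧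
    NoP A (a i) (a (i+1)) ∧ NoP A (a i) (c (i+1)) ∧
    NoP A (c i) (a (i+1)) ∧ NoP A (c i) (c (i+1)) ∧ NoP A (b i) (b (i+1)))

variable {A a b c}

lemma memA {i : ZMod k} : a i ∈ Triple a b c i := by simp [Triple]
lemma memB {i : ZMod k} : b i ∈ Triple a b c i := by simp [Triple]
lemma memC {i : ZMod k} : c i ∈ Triple a b c i := by simp [Triple]

lemma Tsub {τ : Bool} {i : ZMod k} : Tset a b c τ i ⊆ Triple a b c i := by
  cases τ <;> intro v hv <;> simp [Tset] at hv
  · rcases hv with rfl | rfl <;> simp [Triple]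
  · subst hv; simp [Triple]

lemma TsetNonempty {τ : Bool} {i : ZMod k} : (Tset a b c τ i).Nonempty := by
  cases τ
  · exact ⟨a i, by simp [Tset]⟩
  · exact ⟨b i, by simp [Tset]⟩

lemma missOnly [Fintype V] (hP : MissingPaths2 A)
    (hmiss : ∀ i, IsMissing A (a i) (b i) ∧ IsMissing A (b i) (c i) ∧ a i ≠ c i)
    (i : ZMod k) (v : V) :
    (IsMissing A (a i) v → v = b i) ∧ (IsMissing A (c i) v → v = b i) ∧
    (IsMissing A (b i) v → v = a i ∨ v = c i) := by
  obtain ⟨hab, hbc, hac⟩ := hmiss i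
  have hsymm : ∀ x y : V, IsMissing A x y → IsMissing A y x :=
    fun x y ⟨h1, h2, h3⟩ => ⟨h1.symm, h3, h2⟩
  have hsub : ({a i, c i} : Set V) ⊆ {w | IsMissing A (b i) w} := by
    intro w hw
    rcases hw with rfl | hw
    · exact hsymm _ _ hab
    · rcases hw with rfl
      exact hbc
  have hdb : 2 ≤ mdeg A (b i) := by
    have h2 : ({a i, c i} : Set V).ncard = 2 := Set.ncard_pair hac
    have := Set.ncard_le_ncard hsub (Set.toFinite _)
    rw [h2] at this
    exact this
  have hda : mdeg A (a i) = 1 ∧ mdeg A (b i) = 2 := by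
    rcases hP _ _ hab with h | h
    · exact h
    · omega
  have hdc : mdeg A (c i) = 1 := by
    rcases hP _ _ hbc with h | h
    · omega
    · exact h.2
  refine ⟨?_, ?_, ?_⟩
  · intro hm
    obtain ⟨x, hx⟩ := Set.ncard_eq_one.mp hda.1
    have h1 : b i ∈ {w | IsMissing A (a i) w} := hab
    have h2 : v ∈ {w | IsMissing A (a i) w} := hm
    rw [hx] at h1 h2
    simp at h1 h2
    rw [h2, h1]
  · intro hm
    obtain ⟨x, hx⟩ := Set.ncard_eq_one.mp hdc
    have h1 : b i ∈ {w | IsMissing A (c i) w} := hsymm _ _ hbc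
    have h2 : v ∈ {w | IsMissing A (c i) w} := hm
    rw [hx] at h1 h2
    simp at h1 h2
    rw [h2, h1]
  · intro hm
    obtain ⟨x, y, hxy, hS⟩ := Set.ncard_eq_two.mp hda.2
    have h1 : a i ∈ {w | IsMissing A (b i) w} := hsymm _ _ hab
    have h2 : c i ∈ {w | IsMissing A (b i) w} := hbc
    have h3 : v ∈ {w | IsMissing A (b i) w} := hm
    rw [hS] at h1 h2 h3
    simp at h1 h2 h3
    rcases h1 with h1 | h1 <;> rcases h2 with h2 | h2 <;> rcases h3 with h3 | h3 <;> simp_all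
 
lemma noMiss [Fintype V] (hP : MissingPaths2 A)
    (hmiss : ∀ i, IsMissing A (a i) (b i) ∧ IsMissing A (b i) (c i) ∧ a i ≠ c i)
    (hdisj : ∀ i j, i ≠ j → Disjoint (Triple a b c i) (Triple a b c j)) :
    NoMissP A a b c := by
  intro i j u v hu hv hij huv
  by_contra hvu
  have hne : u ≠ v := by
    intro h
    exact Set.disjoint_left.mp (hdisj i j hij) hu (h ▸ hv)
  have hm : IsMissing A u v := ⟨hne, huv, hvu⟩
  have hvmem : v ∈ Triple a b c i := by
    rcases hu with rfl | rfl | rfl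
    · rw [(missOnly hP hmiss i v).1 hm]; exact memB
    · rcases (missOnly hP hmiss i v).2.2 hm with rfl | rfl
      · exact memA
      · exact memC
    · rw [(missOnly hP hmiss i v).2.1 hm]; exact memB
  exact Set.disjoint_left.mp (hdisj i j hij) hvmem hv

lemma stepFacts (hA : Oriented A) (hk : 2 ≤ k) (hnm : NoMissP A a b c)
    (hdisj : ∀ i j, i ≠ j → Disjoint (Triple a b c i) (Triple a b c j))
    (hlose : ∀ i, Loses A (a i) (b i) (a (i + 1)) (b (i + 1)) ∧
        Loses A (a i) (b i) (b (i + 1)) (c (i + 1)) ∧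
        Loses A (b i) (c i) (a (i + 1)) (b (i + 1)) ∧
        Loses A (b i) (c i) (b (i + 1)) (c (i + 1))) :
    StepP A a b c := by
  haveI : Fact (1 < k) := ⟨by omega⟩
  intro i
  have hii : i ≠ i + 1 := by
    intro h
    exact one_ne_zero (left_eq_add.mp h)
  have hd : ∀ u v : V, u ∈ Triple a b c i → v ∈ Triple a b c (i+1) → v ≠ u := by
    intro u v hu hv h
    exact Set.disjoint_left.mp (hdisj i (i+1) hii) hu (h ▸ hv)
  have hback : ∀ u v : V, u ∈ Triple a b c i → v ∈ Triple a b c (i+1) →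
      ¬ A u v → A v u := fun u v hu hv => hnm i (i+1) u v hu hv hii
  obtain ⟨L1, L2, L3, L4⟩ := hlose i
  by_cases p : A (b i) (b (i+1))
  · left
    refine ⟨sB_true_iff.mpr p, ?_⟩
    rcases L1 with h1 | h1
    swap
    · exact absurd p h1.2.2.2.2.1
    rcases L2 with h2 | h2
    · exact absurd p h2.2.2.2.2.1
    rcases L3 with h3 | h3
    · exact absurd h3.1 h1.2.2.2.2.1
    rcases L4 with h4 | h4
    swap
    · exact absurd p h4.2.2.1
    obtain ⟨hax, -, hay, hSay, hbx, hSbx⟩ := h1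
    obtain ⟨haz, -, -, -, hbz, hSbz⟩ := h2
    obtain ⟨-, hcx, -, -, hcy, hScy⟩ := h3
    obtain ⟨-, hcz, -, hSbz', -, hScy'⟩ := h4
    refine ⟨hax, haz, hcx, hcz, p, hback _ _ memA memB hay, hback _ _ memC memB hcy,
      hback _ _ memB memA hbx, hback _ _ memB memC hbz,
      mkNoP hSay (hd _ _ memA memB) hay, mkNoP hScy (hd _ _ memC memB) hcy,
      mkNoP hSbx (hd _ _ memB memA) hbx, mkNoP hSbz (hd _ _ memB memC) hbz⟩
  · right
    have hsf : sB A b i = false := by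
      rw [← Bool.not_eq_true, sB_true_iff]
      exact p
    refine ⟨hsf, ?_⟩
    rcases L1 with h1 | h1
    · exact absurd h1.2.1 p
    rcases L2 with h2 | h2
    swap
    · exact absurd h2.2.1 p
    rcases L3 with h3 | h3
    swap
    · exact absurd h3.1 p
    rcases L4 with h4 | h4
    · exact absurd h4.1 p
    obtain ⟨hay, hbx, hax, hSax, -, hSby⟩ := h1
    obtain ⟨-, hbz, haz, hSaz, hby, -⟩ := h2
    obtain ⟨-, hcy, -, -, hcx, hScx⟩ := h3
    obtain ⟨-, -, -, hSby', hcz, hScz⟩ := h4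
    refine ⟨hay, hcy, hbx, hbz, hback _ _ memB memB p,
      hback _ _ memA memA hax, hback _ _ memC memA hcx,
      hback _ _ memA memC haz, hback _ _ memC memC hcz,
      mkNoP hSax (hd _ _ memA memA) hax, mkNoP hSaz (hd _ _ memA memC) haz,
      mkNoP hScx (hd _ _ memC memA) hcx, mkNoP hScz (hd _ _ memC memC) hcz,
      mkNoP hSby (hd _ _ memB memB) p⟩


lemma npT (hst : StepP A a b c) (m : ZMod k) (ρ : Bool) :
    ∀ v ∈ Tset a b c ρ (m+1), ∀ u ∈ Tset a b c (xor ρ (sB A b m)) m, NoP A u v := by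
  intro v hv u hu
  rcases hst m with ⟨hs, f1, f2, f3, f4, f5, f6, f7, f8, f9, f10, f11, f12, f13⟩ |
    ⟨hs, g1, g2, g3, g4, g5, g6, g7, g8, g9, g10, g11, g12, g13, g14⟩ <;>
    rw [hs] at hu <;> cases ρ <;>
    simp only [Tset, Bool.xor_true, Bool.xor_false, Bool.not_true, Bool.not_false,
      if_true, if_false, Set.mem_singleton_iff, Set.mem_insert_iff,
      Bool.true_xor, Bool.false_xor, Bool.not_eq_true', Bool.not_false] at hv hu
  · rcases hv with rfl | rfl <;> rcases hu 
    all_goals first | exact f12 | exact f13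
  · rcases hu with rfl | rfl <;> rcases hv
    all_goals first | exact f10 | exact f11
  · rcases hv with rfl | rfl <;> rcases hu with rfl | rfl
    all_goals first | exact g10 | exact g11 | exact g12 | exact g13
  · rcases hv; rcases hu; exact g14

lemma bwdT (hst : StepP A a b c) (m : ZMod k) (ρ : Bool) :
    ∀ v ∈ Tset a b c ρ (m+1), ∀ u ∈ Tset a b c (xor ρ (sB A b m)) m, A v u := by
  intro v hv u hu
  rcases hst m with ⟨hs, f1, f2, f3, f4, f5, f6, f7, f8, f9, f10, f11, f12, f13⟩ |
    ⟨hs, g1, g2, g3, g4, g5, g6, g7, g8, g9, g10, g11, g12, g13, g14⟩ <;>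
    rw [hs] at hu <;> cases ρ <;>
    simp only [Tset, Bool.xor_true, Bool.xor_false, Bool.not_true, Bool.not_false,
      if_true, if_false, Set.mem_singleton_iff, Set.mem_insert_iff,
      Bool.true_xor, Bool.false_xor, Bool.not_eq_true', Bool.not_false] at hv hu
  · rcases hv with rfl | rfl <;> rcases hu 
    all_goals first | exact f8 | exact f9
  · rcases hu with rfl | rfl <;> rcases hv
    all_goals first | exact f6 | exact f7
  · rcases hv with rfl | rfl <;> rcases hu with rfl | rfl
    all_goals first | exact g6 | exact g7 | exact g8 | exact g9
  · rcases hv; rcases hu; exact g5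

lemma xor_cancel_right (τ s : Bool) : xor (xor τ s) s = τ := by
  cases τ <;> cases s <;> rfl

lemma chainStepA (hnm : NoMissP A a b c) (hst : StepP A a b c)
    (m j : ZMod k) (u : V) (τ : Bool) (hu : u ∈ Triple a b c j) (hj : j ≠ m + 1)
    (hex : ∃ v ∈ Tset a b c τ m, A v u) :
    ∀ v' ∈ Tset a b c (xor τ (sB A b m)) (m+1), A v' u := by
  obtain ⟨v, hv, hvu⟩ := hex
  intro v' hv'
  have hv2 : v ∈ Tset a b c (xor (xor τ (sB A b m)) (sB A b m)) m := by
    rw [xor_cancel_right]; exact hv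
  have hnuv : ¬ A u v' := fun h => npT hst m _ v' hv' v hv2 u hvu h
  exact hnm j (m+1) u v' hu (Tsub hv') hj hnuv

lemma chainStepB (hnm : NoMissP A a b c) (hst : StepP A a b c)
    (m j : ZMod k) (u : V) (τ : Bool) (hu : u ∈ Triple a b c j) (hj : j ≠ m)
    (hex : ∃ v' ∈ Tset a b c τ (m+1), A u v') :
    ∀ v ∈ Tset a b c (xor τ (sB A b m)) m, A u v := by
  obtain ⟨v', hv', huv'⟩ := hex
  intro v hv
  have hnvu : ¬ A v u := fun h => npT hst m _ v' hv' v hv u h huv'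
  exact hnm (m) j v u (Tsub hv) hu (Ne.symm hj) hnvu |> fun h => h

lemma par_zero (p : ZMod k) : par A b p 0 = false := rfl

lemma par_succ (p : ZMod k) (n : ℕ) :
    par A b p (n+1) = xor (par A b p n) (sB A b (p + (n : ℕ))) := rfl

lemma par_one (p : ZMod k) : par A b p 1 = sB A b p := by
  simp [par_succ, par_zero]

lemma par_succ_front (n : ℕ) (p : ZMod k) :
    par A b p (n+1) = xor (sB A b p) (par A b (p+1) n) := by
  induction n generalizing p with
  | zero => simp [par_one, par_zero]
  | succ n ih =>
    have hc : p + ((n+1 : ℕ) : ZMod k) = (p+1) + (n : ℕ) := by push_cast; ring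
    rw [par_succ, ih, par_succ, hc, Bool.xor_assoc]

lemma par_add (p : ZMod k) (m n : ℕ) :
    par A b p (m+n) = xor (par A b p m) (par A b (p + (m : ℕ)) n) := by
  induction n with
  | zero => simp [par_zero]
  | succ n ih =>
    have hc : p + ((m+n : ℕ) : ZMod k) = (p + (m:ℕ)) + (n : ℕ) := by push_cast; ring
    rw [← Nat.add_assoc, par_succ, ih, par_succ, hc, Bool.xor_assoc]

lemma chainA (hnm : NoMissP A a b c) (hst : StepP A a b c)
    (i j : ZMod k) (u : V) (hu : u ∈ Triple a b c j)
    (hstart : A (a i) u ∨ A (c i) u) :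
    ∀ n : ℕ, 1 ≤ n → (∀ l : ℕ, 1 ≤ l → l ≤ n → j ≠ i + (l : ℕ)) →
      ∀ v ∈ Tset a b c (par A b i n) (i + (n : ℕ)), A v u := by
  intro n
  induction n with
  | zero => omega
  | succ n ih =>
    intro _ hdist
    rcases Nat.eq_zero_or_pos n with rfl | hn
    · have h1 : j ≠ i + 1 := by
        have := hdist 1 le_rfl le_rfl
        simpa using this
      have hex : ∃ v ∈ Tset a b c false i, A v u := by
        rcases hstart with h | h
        · exact ⟨a i, by simp [Tset], h⟩
        · exact ⟨c i, by simp [Tset], h⟩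
      have := chainStepA hnm hst i j u false hu h1 hex
      intro v hv
      apply this
      have e1 : par A b i 1 = xor false (sB A b i) := by simp [par_one]
      have e2 : i + ((1:ℕ) : ZMod k) = i + 1 := by norm_num
      rw [e1, e2] at hv
      exact hv
    · have ihh := ih hn (fun l h1 h2 => hdist l h1 (by omega))
      have hj : j ≠ (i + (n : ℕ)) + 1 := by
        have := hdist (n+1) (by omega) le_rfl
        intro h
        apply this
        rw [h]; push_cast; ring
      have hex : ∃ v ∈ Tset a b c (par A b i n) (i + (n : ℕ)), A v u := by
        obtain ⟨v, hv⟩ := TsetNonempty (τ := par A b i n) (i := i + (n : ℕ))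
          (a := a) (b := b) (c := c)
        exact ⟨v, hv, ihh v hv⟩
      have := chainStepA hnm hst (i + (n:ℕ)) j u (par A b i n) hu hj hex
      intro v hv
      apply this
      have e2 : i + ((n+1:ℕ) : ZMod k) = (i + (n:ℕ)) + 1 := by push_cast; ring
      rw [par_succ, e2] at hv
      exact hv

lemma chainB (hnm : NoMissP A a b c) (hst : StepP A a b c)
    (i j : ZMod k) (u : V) (hu : u ∈ Triple a b c j)
    (hstart : A u (a i) ∨ A u (c i)) :
    ∀ n : ℕ, 1 ≤ n → (∀ l : ℕ, 1 ≤ l → l ≤ n → j ≠ i - (l : ℕ)) →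
      ∀ v ∈ Tset a b c (par A b (i - (n : ℕ)) n) (i - (n : ℕ)), A u v := by
  intro n
  induction n with
  | zero => omega
  | succ n ih =>
    intro _ hdist
    rcases Nat.eq_zero_or_pos n with rfl | hn
    · have h1 : j ≠ i - 1 := by
        have := hdist 1 le_rfl le_rfl
        simpa using this
      have hex : ∃ v' ∈ Tset a b c false ((i-1)+1), A u v' := by
        rw [sub_add_cancel]
        rcases hstart with h | h
        · exact ⟨a i, by simp [Tset], h⟩
        · exact ⟨c i, by simp [Tset], h⟩
      have := chainStepB hnm hst (i-1) j u false hu h1 hex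
      intro v hv
      apply this
      have e1 : par A b (i - ((1:ℕ):ZMod k)) 1 = xor false (sB A b (i-1)) := by
        norm_num [par_one]
      have e2 : i - ((1:ℕ) : ZMod k) = i - 1 := by norm_num
      rw [e1, e2] at hv
      exact hv
    · have ihh := ih hn (fun l h1 h2 => hdist l h1 (by omega))
      have hj : j ≠ i - ((n+1 : ℕ) : ZMod k) := hdist (n+1) (by omega) le_rfl
      have hme : (i - ((n+1 : ℕ) : ZMod k)) + 1 = i - (n : ℕ) := by push_cast; ring
      have hex : ∃ v' ∈ Tset a b c (par A b (i - (n:ℕ)) n) ((i - ((n+1:ℕ):ZMod k)) + 1),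
          A u v' := by
        rw [hme]
        obtain ⟨v, hv⟩ := TsetNonempty (τ := par A b (i - (n:ℕ)) n) (i := i - (n : ℕ))
          (a := a) (b := b) (c := c)
        exact ⟨v, hv, ihh v hv⟩
      have hstep := chainStepB hnm hst (i - ((n+1:ℕ):ZMod k)) j u
        (par A b (i - (n:ℕ)) n) hu hj hex
      intro v hv
      apply hstep
      have e3 : par A b (i - ((n+1:ℕ):ZMod k)) (n+1)
          = xor (par A b (i - (n:ℕ)) n) (sB A b (i - ((n+1:ℕ):ZMod k))) := by
        rw [par_succ_front]
        rw [hme]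
        exact Bool.xor_comm _ _
      rw [e3] at hv
      exact hv

lemma parity (hA : Oriented A) (hk : 2 ≤ k) (hnm : NoMissP A a b c)
    (hst : StepP A a b c)
    (hdisj : ∀ i j, i ≠ j → Disjoint (Triple a b c i) (Triple a b c j)) :
    ∀ p : ZMod k, par A b p k = true := by
  haveI : NeZero k := ⟨by omega⟩
  intro p
  have hnei : ∀ n : ℕ, 1 ≤ n → n ≤ k - 1 → p ≠ p + (n : ℕ) := by
    intro n h1 h2 h
    have h0 : ((n : ℕ) : ZMod k) = 0 := by
      have := congrArg (fun z => z - p) h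
      simpa using this.symm
    have := ZMod.val_cast_of_lt (show n < k by omega)
    rw [h0] at this
    simp [ZMod.val_zero] at this
    omega
  have claim : ∀ n : ℕ, 1 ≤ n → n ≤ k - 1 →
      ∀ v ∈ Tset a b c (xor true (par A b p n)) (p + (n : ℕ)), A v (b p) := by
    intro n
    induction n with
    | zero => omega
    | succ n ih =>
      intro _ hle
      rcases Nat.eq_zero_or_pos n with rfl | hn
      · intro v hv
        have hbp : b p ∈ Tset a b c (xor (xor true (sB A b p)) (sB A b p)) p := by
          rw [xor_cancel_right]; simp [Tset]
        apply bwdT hst p (xor true (sB A b p)) v _ (b p) hbp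
        have e1 : xor true (par A b p 1) = xor true (sB A b p) := by rw [par_one]
        have e2 : p + ((1:ℕ) : ZMod k) = p + 1 := by norm_num
        rw [e1, e2] at hv
        exact hv
      · have ihh := ih hn (by omega)
        have hj : p ≠ (p + (n : ℕ)) + 1 := by
          have h2 := hnei (n+1) (by omega) hle
          intro h
          exact h2 (h.trans (by push_cast; ring))
        have hex : ∃ v ∈ Tset a b c (xor true (par A b p n)) (p + (n : ℕ)), A v (b p) := by
          obtain ⟨v, hv⟩ := TsetNonempty (τ := xor true (par A b p n)) (i := p + (n : ℕ))
            (a := a) (b := b) (c := c)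
          exact ⟨v, hv, ihh v hv⟩
        have hstep := chainStepA hnm hst (p + (n:ℕ)) p (b p) (xor true (par A b p n))
          memB hj hex
        intro v hv
        apply hstep
        have e2 : p + ((n+1:ℕ) : ZMod k) = (p + (n:ℕ)) + 1 := by push_cast; ring
        have e3 : xor true (par A b p (n+1))
            = xor (xor true (par A b p n)) (sB A b (p + (n:ℕ))) := by
          rw [par_succ, Bool.xor_assoc]
        rw [e3, e2] at hv
        exact hv
  have H := claim (k-1) (by omega) le_rfl
  have hpos : p + ((k-1 : ℕ) : ZMod k) = p - 1 := by
    have : ((k-1 : ℕ) : ZMod k) = -1 := by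
      have : ((k-1 : ℕ) : ZMod k) + 1 = ((k : ℕ) : ZMod k) := by
        have : (k - 1) + 1 = k := by omega
        rw [← this]; push_cast; ring
      rw [ZMod.natCast_self] at this
      linear_combination this
    rw [this]; ring
  rw [hpos] at H
  -- structural: b p beats Tset (xor true (sB (p-1))) (p-1)
  have SB : ∀ w ∈ Tset a b c (xor true (sB A b (p-1))) (p-1), A (b p) w := by
    intro w hw
    have hbp : b p ∈ Tset a b c true ((p-1)+1) := by rw [sub_add_cancel]; simp [Tset]
    exact bwdT hst (p-1) true (b p) hbp w hw
  have hneq : par A b p (k-1) ≠ sB A b (p-1) := by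
    intro e
    obtain ⟨w, hw⟩ := TsetNonempty (τ := xor true (sB A b (p-1))) (i := p - 1)
      (a := a) (b := b) (c := c)
    have h1 : A w (b p) := H w (by rw [e]; exact hw)
    have h2 : A (b p) w := SB w hw
    exact hA _ _ h1 h2
  have hk1 : k - 1 + 1 = k := by omega
  have e0 : par A b p (k-1+1) = xor (par A b p (k-1)) (sB A b (p + ((k-1:ℕ) : ZMod k))) :=
    par_succ _ _
  rw [hk1] at e0
  rw [e0, hpos]
  revert hneq
  cases par A b p (k-1) <;> cases sB A b (p-1) <;> simp

lemma boolhelp : ∀ x y z : Bool, x ≠ xor z y → z = !(xor x y) := by decide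

lemma mainLemma (hA : Oriented A) (hk : 2 ≤ k) (hnm : NoMissP A a b c)
    (hst : StepP A a b c)
    (hdisj : ∀ i j, i ≠ j → Disjoint (Triple a b c i) (Triple a b c j))
    (i j : ZMod k) (u : V) (hu : u ∈ Triple a b c j)
    (hji : j ≠ i) (hjp : j ≠ i + 1) (hjm : j ≠ i - 1)
    (hout : A (a i) u ∨ A (c i) u) (hin : A u (a i) ∨ A u (c i)) : False := by
  haveI : NeZero k := ⟨by omega⟩
  set d : ℕ := (j - i).val with hd
  have hdval : ((d : ℕ) : ZMod k) = j - i := ZMod.natCast_rightInverse _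
  have hdlt : d < k := ZMod.val_lt _
  have hd0 : d ≠ 0 := by
    intro h
    rw [h] at hdval
    simp at hdval
    exact hji (sub_eq_zero.mp hdval.symm)
  have hd1 : d ≠ 1 := by
    intro h
    rw [h] at hdval
    simp at hdval
    apply hjp
    have : j = 1 + i := sub_eq_iff_eq_add.mp hdval.symm
    rw [this]; ring
  have hdk1 : d ≠ k - 1 := by
    intro h
    apply hjm
    have hcast : ((d : ℕ) : ZMod k) = -1 := by
      rw [h]
      have h2 : (((k-1) : ℕ) : ZMod k) = ((k : ℕ) : ZMod k) - 1 := by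
        rw [Nat.cast_sub (by omega : 1 ≤ k)]; simp
      rw [h2, ZMod.natCast_self]
      ring
    rw [hcast] at hdval
    linear_combination hdval.symm
  have h2d : 2 ≤ d := by omega
  have hdk2 : d ≤ k - 2 := by omega
  have hji_eq : j = i + ((d : ℕ) : ZMod k) := by rw [hdval]; ring
  -- chain A
  have hdistA : ∀ l : ℕ, 1 ≤ l → l ≤ d - 1 → j ≠ i + (l : ℕ) := by
    intro l h1 h2 h
    have : ((l : ℕ) : ZMod k) = ((d : ℕ) : ZMod k) := by
      have := h.symm.trans hji_eq
      exact add_left_cancel this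
    have hv := congrArg ZMod.val this
    rw [ZMod.val_cast_of_lt (by omega), ZMod.val_cast_of_lt (by omega)] at hv
    omega
  have HA := chainA hnm hst i j u hu hout (d-1) (by omega) hdistA
  -- chain B
  have hdistB : ∀ l : ℕ, 1 ≤ l → l ≤ k - d - 1 → j ≠ i - (l : ℕ) := by
    intro l h1 h2 h
    have hsum : ((d : ℕ) : ZMod k) + ((l : ℕ) : ZMod k) = 0 := by
      have := hji_eq.symm.trans h
      linear_combination this
    have hcast : (((d + l) : ℕ) : ZMod k) = 0 := by push_cast; exact hsum
    have hv := congrArg ZMod.val hcast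
    rw [ZMod.val_cast_of_lt (by omega), ZMod.val_zero] at hv
    omega
  have HB := chainB hnm hst i j u hu hin (k-d-1) (by omega) hdistB
  -- positions
  have e1 : i + (((d-1) : ℕ) : ZMod k) = j - 1 := by
    rw [Nat.cast_sub (by omega : 1 ≤ d), hji_eq]
    push_cast
    ring
  have e2 : i - (((k-d-1) : ℕ) : ZMod k) = j + 1 := by
    rw [Nat.cast_sub (by omega : 1 ≤ k - d), Nat.cast_sub (by omega : d ≤ k),
      ZMod.natCast_self, hji_eq]
    push_cast
    ring
  rw [e1] at HA
  rw [e2] at HB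
  -- the type of u
  have hu' : u = a j ∨ u = b j ∨ u = c j := by simpa [Triple] using hu
  obtain ⟨γ, huT⟩ : ∃ γ : Bool, u ∈ Tset a b c γ j := by
    rcases hu' with rfl | rfl | rfl
    · exact ⟨false, by simp [Tset]⟩
    · exact ⟨true, by simp [Tset]⟩
    · exact ⟨false, by simp [Tset]⟩
  -- structural arcs around triple j
  have SBk : ∀ w ∈ Tset a b c (xor γ (sB A b (j-1))) (j-1), A u w := by
    intro w hw
    have hu2 : u ∈ Tset a b c γ ((j-1)+1) := by rw [sub_add_cancel]; exact huT
    exact bwdT hst (j-1) γ u hu2 w hw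
  have SF : ∀ w ∈ Tset a b c (xor γ (sB A b j)) (j+1), A w u := by
    intro w hw
    have hu2 : u ∈ Tset a b c (xor (xor γ (sB A b j)) (sB A b j)) j := by
      rw [xor_cancel_right]; exact huT
    exact bwdT hst j _ w hw u hu2
  -- contradiction equations
  have hne1 : par A b i (d-1) ≠ xor γ (sB A b (j-1)) := by
    intro e
    obtain ⟨w, hw⟩ := TsetNonempty (τ := xor γ (sB A b (j-1))) (i := j - 1)
      (a := a) (b := b) (c := c)
    have hw2 : w ∈ Tset a b c (par A b i (d-1)) (j-1) := by rw [e]; exact hw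
    exact hA _ _ (HA w hw2) (SBk w hw)
  have hne2 : par A b (j+1) (k-d-1) ≠ xor γ (sB A b j) := by
    intro e
    obtain ⟨w, hw⟩ := TsetNonempty (τ := xor γ (sB A b j)) (i := j + 1)
      (a := a) (b := b) (c := c)
    have hw2 : w ∈ Tset a b c (par A b (j+1) (k-d-1)) (j+1) := by rw [e]; exact hw
    exact hA _ _ (SF w hw) (HB w hw2)
  have hγ1 : γ = !(xor (par A b i (d-1)) (sB A b (j-1))) := boolhelp _ _ _ hne1
  have hγ2 : γ = !(xor (par A b (j+1) (k-d-1)) (sB A b j)) := boolhelp _ _ _ hne2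
  have epd : par A b i d = xor (par A b i (d-1)) (sB A b (j-1)) := by
    have e0 := par_succ (A := A) (b := b) i (d-1)
    rw [show d - 1 + 1 = d by omega] at e0
    rw [e0, e1]
  have epk : par A b j (k-d) = xor (par A b (j+1) (k-d-1)) (sB A b j) := by
    have e0 := par_succ_front (A := A) (b := b) (k-d-1) j
    rw [show k - d - 1 + 1 = k - d by omega] at e0
    rw [e0, Bool.xor_comm]
  have heq : par A b i d = par A b j (k-d) := by
    have h1 := hγ1.symm.trans hγ2
    rw [← epd, ← epk] at h1
    have h2 := congrArg (fun z => !z) h1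
    simpa using h2
  have hfull : par A b i k = xor (par A b i d) (par A b j (k-d)) := by
    have e0 := par_add (A := A) (b := b) i d (k-d)
    rw [show d + (k - d) = k by omega, ← hji_eq] at e0
    exact e0
  have := parity hA hk hnm hst hdisj i
  rw [hfull, heq] at this
  simp at this

lemma twin (hA : Oriented A) (hk : 2 ≤ k) (hnm : NoMissP A a b c)
    (hst : StepP A a b c)
    (hdisj : ∀ i j, i ≠ j → Disjoint (Triple a b c i) (Triple a b c j))
    (i j : ZMod k) (u : V) (hu : u ∈ Triple a b c j) (hji : j ≠ i) :
    (A (a i) u ↔ A (c i) u) ∧ (A u (a i) ↔ A u (c i)) := by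
  by_cases hjp : j = i + 1
  · subst hjp
    have hu' : u = a (i+1) ∨ u = b (i+1) ∨ u = c (i+1) := by simpa [Triple] using hu
    rcases hst i with ⟨hs, f1, f2, f3, f4, f5, f6, f7, f8, f9, -⟩ |
      ⟨hs, g1, g2, g3, g4, g5, g6, g7, g8, g9, -⟩ <;>
      rcases hu' with rfl | rfl | rfl
    · exact ⟨iff_of_true f1 f3, iff_of_false (hA _ _ f1) (hA _ _ f3)⟩
    · exact ⟨iff_of_false (hA _ _ f6) (hA _ _ f7), iff_of_true f6 f7⟩
    · exact ⟨iff_of_true f2 f4, iff_of_false (hA _ _ f2) (hA _ _ f4)⟩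
    · exact ⟨iff_of_false (hA _ _ g6) (hA _ _ g7), iff_of_true g6 g7⟩
    · exact ⟨iff_of_true g1 g2, iff_of_false (hA _ _ g1) (hA _ _ g2)⟩
    · exact ⟨iff_of_false (hA _ _ g8) (hA _ _ g9), iff_of_true g8 g9⟩
  · by_cases hjm : j = i - 1
    · subst hjm
      have hu' : u = a (i-1) ∨ u = b (i-1) ∨ u = c (i-1) := by simpa [Triple] using hu
      rcases hst (i-1) with ⟨hs, f1, f2, f3, f4, f5, f6, f7, f8, f9, -⟩ |
        ⟨hs, g1, g2, g3, g4, g5, g6, g7, g8, g9, -⟩ <;>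
        rw [sub_add_cancel] at * <;>
        rcases hu' with rfl | rfl | rfl
      · exact ⟨iff_of_false (hA _ _ f1) (hA _ _ f2), iff_of_true f1 f2⟩
      · exact ⟨iff_of_true f8 f9, iff_of_false (hA _ _ f8) (hA _ _ f9)⟩
      · exact ⟨iff_of_false (hA _ _ f3) (hA _ _ f4), iff_of_true f3 f4⟩
      · exact ⟨iff_of_true g6 g8, iff_of_false (hA _ _ g6) (hA _ _ g8)⟩
      · exact ⟨iff_of_false (hA _ _ g3) (hA _ _ g4), iff_of_true g3 g4⟩
      · exact ⟨iff_of_true g7 g9, iff_of_false (hA _ _ g7) (hA _ _ g9)⟩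
    · constructor
      · constructor
        · intro h
          by_contra hc
          exact mainLemma hA hk hnm hst hdisj i j u hu hji hjp hjm (Or.inl h)
            (Or.inr (hnm i j (c i) u memC hu (Ne.symm hji) hc))
        · intro h
          by_contra hc
          exact mainLemma hA hk hnm hst hdisj i j u hu hji hjp hjm (Or.inr h)
            (Or.inl (hnm i j (a i) u memA hu (Ne.symm hji) hc))
      · constructor
        · intro h
          by_contra hc
          exact mainLemma hA hk hnm hst hdisj i j u hu hji hjp hjm
            (Or.inr (hnm j i u (c i) hu memC hji hc)) (Or.inl h)
        · intro h
          by_contra hc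
          exact mainLemma hA hk hnm hst hdisj i j u hu hji hjp hjm
            (Or.inl (hnm j i u (a i) hu memA hji hc)) (Or.inr h)

lemma secondOutSub {A : V → V → Prop} (hA : Oriented A) (K : Set V) (x y bb : V)
    (hbx : ¬ A x bb) (hby : ¬ A y bb)
    (htwin : ∀ u ∈ K, u ≠ x → u ≠ y → u ≠ bb → (A x u ↔ A y u) ∧ (A u x ↔ A u y)) :
    secondOutIn A K x ⊆ secondOutIn A K y := by
  rintro u ⟨huK, hux, hxu, w, hwK, hxw, hwu⟩
  have hwx : w ≠ x := by rintro rfl; exact hA _ _ hxw hxw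
  have hwbb : w ≠ bb := by rintro rfl; exact hbx hxw
  have hwy : w ≠ y := by
    intro h
    rw [h] at hwu
    have huy : u ≠ y := fun hh => hA _ _ hwu (hh ▸ hwu)
    have hubb : u ≠ bb := fun hh => hby (hh ▸ hwu)
    exact hxu ((htwin u huK hux huy hubb).1.mpr hwu)
  have hyw : A y w := (htwin w hwK hwx hwy hwbb).1.mp hxw
  have huy : u ≠ y := by
    intro h
    rw [h] at hwu
    exact hA _ _ hxw ((htwin w hwK hwx hwy hwbb).2.mpr hwu)
  have hyu : ¬ A y u := by
    by_cases hubb : u = bb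
    · rw [hubb]; exact hby
    · exact fun h => hxu ((htwin u huK hux huy hubb).1.mpr h)
  exact ⟨huK, huy, hyu, w, hwK, hyw, hwu⟩

lemma orientedFlip {A : V → V → Prop} (hA : Oriented A) :
    Oriented (fun u v => A v u) := fun u v h1 h2 => hA v u h1 h2

lemma secondInIn_eq_flip {A : V → V → Prop} {K : Set V} {v : V} :
    secondInIn A K v = secondOutIn (fun p q => A q p) K v := by
  ext u
  constructor <;> rintro ⟨h1, h2, h3, w, h4, h5, h6⟩ <;> exact ⟨h1, h2, h3, w, h4, h6, h5⟩

end Aux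

/-- Lemma 4.9: `aᵢ` and `cᵢ` have the same second neighborhoods in `D[K(C)]`. -/
theorem stmt8 {V : Type*} [Fintype V] (A : V → V → Prop) (hA : Oriented A)
    (hP : MissingPaths2 A) (k : ℕ) (a b c : ZMod k → V)
    (hC : IsDoubleCycle A k a b c) (K : Set V) (hK : K = Kset a b c) :
    ∀ i, secondOutIn A K (a i) = secondOutIn A K (c i) ∧
         secondInIn A K (a i) = secondInIn A K (c i) := by
  obtain ⟨hk, hmiss, hdisj, hlose⟩ := hC
  have hdisj' : ∀ i j, i ≠ j → Disjoint (Triple a b c i) (Triple a b c j) := hdisj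
  have hnm := noMiss hP hmiss hdisj'
  have hst := stepFacts hA hk hnm hdisj' hlose
  intro i
  obtain ⟨hab, hbc, hac⟩ := hmiss i
  have htwin : ∀ u ∈ K, u ≠ a i → u ≠ c i → u ≠ b i →
      (A (a i) u ↔ A (c i) u) ∧ (A u (a i) ↔ A u (c i)) := by
    intro u huK h1 h2 h3
    rw [hK] at huK
    obtain ⟨j, hj⟩ := huK
    have huT : u ∈ Triple a b c j := by rcases hj with rfl | rfl | rfl <;> simp [Triple]
    have hji : j ≠ i := by
      intro h
      subst h
      rcases hj with rfl | rfl | rfl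
      · exact h1 rfl
      · exact h3 rfl
      · exact h2 rfl
    exact twin hA hk hnm hst hdisj' i j u huT hji
  have htwin' : ∀ u ∈ K, u ≠ c i → u ≠ a i → u ≠ b i →
      (A (c i) u ↔ A (a i) u) ∧ (A u (c i) ↔ A u (a i)) := by
    intro u hu h1 h2 h3
    exact ⟨(htwin u hu h2 h1 h3).1.symm, (htwin u hu h2 h1 h3).2.symm⟩
  constructor
  · apply Set.Subset.antisymm
    · exact secondOutSub hA K (a i) (c i) (b i) hab.2.1 hbc.2.2 htwin
    · exact secondOutSub hA K (c i) (a i) (b i) hbc.2.2 hab.2.1 htwin'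
  · rw [secondInIn_eq_flip, secondInIn_eq_flip]
    apply Set.Subset.antisymm
    · exact secondOutSub (orientedFlip hA) K (a i) (c i) (b i) hab.2.2 hbc.2.1
        (fun u hu h1 h2 h3 => ⟨(htwin u hu h1 h2 h3).2, (htwin u hu h1 h2 h3).1⟩)
    · exact secondOutSub (orientedFlip hA) K (c i) (a i) (b i) hbc.2.1 hab.2.2
        (fun u hu h1 h2 h3 => ⟨(htwin' u hu h1 h2 h3).2, (htwin' u hu h1 h2 h3).1⟩)

end SSNC
end

section
/- Let D be a tournament missing disjoint paths of length 2 and let C = a_1b_1c_1, …, a_kb_kc_k be a double cycle in Δ(D). For all t ∈ {1,…,k} and i ∈ {1,…,k} with i ≠ t, with all neighborhoods taken in the induced subdigraph D[K(C)]: (1) the following are equivalent: a_i ∈ N⁺(a_t) ∪ N⁺(c_t) ∪ N⁻(b_t); c_i ∈ N⁺(a_t) ∪ N⁺(c_t) ∪ N⁻(b_t); {a_i, c_i} ⊆ N⁺(a_t) ∩ N⁺(c_t) ∩ N⁻(b_t); b_i ∈ N⁻(a_t) ∪ N⁻(c_t) ∪ N⁺(b_t); b_i ∈ N⁻(a_t)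 ∩ N⁻(c_t) ∩ N⁺(b_t). (2) the following are equivalent: a_i ∈ N⁻(a_t) ∪ N⁻(c_t) ∪ N⁺(b_t); c_i ∈ N⁻(a_t) ∪ N⁻(c_t) ∪ N⁺(b_t); {a_i, c_i} ⊆ N⁻(a_t) ∩ N⁻(c_t) ∩ N⁺(b_t); b_i ∈ N⁺(a_t) ∪ N⁺(c_t) ∪ N⁻(b_t); b_i ∈ N⁺(a_t) ∩ N⁺(c_t) ∩ N⁻(b_t). -/
namespace SSNC

variable {V : Type*}

/-! ### Auxiliary machinery for Corollary 4.10 -/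

/-- `NS A u v`: no directed path of length 2 from `u` to `v`. -/
def NS (A : V → V → Prop) (u v : V) : Prop := ∀ w, ¬ (A u w ∧ A w v)

/-- The "J-half" of the canonical pattern between the path `p q r` and the path
`x y z`: the ends of the second path beat `q`, and `y` beats the ends of the first. -/
def JpP (A : V → V → Prop) (p q r x y z : V) : Prop :=
  A x q ∧ A z q ∧ A y p ∧ A y r

/-- The "H-half" of the canonical pattern: the ends of the second path beat the ends
of the first, and `y` beats `q`. -/
def HpP (A : V → V → Prop) (p q r x y z : V) : Prop :=
  A x p ∧ A x r ∧ A z p ∧ A z r ∧ A y q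

/-- Full pattern: path `p q r` dominates path `x y z`. -/
def FpP (A : V → V → Prop) (p q r x y z : V) : Prop :=
  HpP A x y z p q r ∧ JpP A p q r x y z

/-- From the four losing relations between two consecutive missing paths, the nine
cross arcs form one of the two canonical full patterns, together with the
corresponding second-neighborhood restrictions. -/
lemma consec_lemma (A : V → V → Prop) (p q r x y z : V)
    (hne : ∀ u v, (u = p ∨ u = q ∨ u = r) → (v = x ∨ v = y ∨ v = z) → u ≠ v)
    (hadj : ∀ u v, (u = p ∨ u = q ∨ u = r) → (v = x ∨ v = y ∨ v = z) → A u v ∨ A v u)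
    (hL1 : Loses A p q x y) (hL2 : Loses A p q y z)
    (hL3 : Loses A q r x y) (hL4 : Loses A q r y z) :
    (FpP A p q r x y z ∧ NS A p y ∧ NS A q x ∧ NS A q z) ∨
    (FpP A x y z p q r ∧ NS A p x ∧ NS A p z ∧ NS A q y) := by
  simp only [Loses, LosesOrd] at hL1 hL2 hL3 hL4
  simp only [FpP, HpP, JpP, NS]
  have res : ∀ u v, (u = p ∨ u = q ∨ u = r) → (v = x ∨ v = y ∨ v = z) →
      ¬ A u v → A v u := fun u v hu hv h => (hadj u v hu hv).resolve_left h
  rcases hL1 with ⟨Apx, Aqy, nApy, nSpy, nAqx, nSqx⟩ | ⟨Apy, Aqx, nApx, nSpx, nAqy, nSqy⟩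
  · rcases hL2 with ⟨h, -⟩ | ⟨Apz, -, -, -, nAqz, nSqz⟩
    · exact absurd h nApy
    rcases hL3 with ⟨h, -⟩ | ⟨-, Arx, -, -, nAry, -⟩
    · exact absurd h nAqx
    rcases hL4 with ⟨-, Arz, -, -, -, -⟩ | ⟨h, -⟩
    swap
    · exact absurd h nAqz
    refine Or.inl ⟨⟨⟨Apx, Apz, Arx, Arz, Aqy⟩, ?_, ?_, ?_, ?_⟩, ?_, ?_, ?_⟩
    · exact res q x (by tauto) (by tauto) nAqx
    · exact res q z (by tauto) (by tauto) nAqz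
    · exact res p y (by tauto) (by tauto) nApy
    · exact res r y (by tauto) (by tauto) nAry
    · exact fun w hw => nSpy ⟨(hne p y (by tauto) (by tauto)).symm, nApy, w, hw.1, hw.2⟩
    · exact fun w hw => nSqx ⟨(hne q x (by tauto) (by tauto)).symm, nAqx, w, hw.1, hw.2⟩
    · exact fun w hw => nSqz ⟨(hne q z (by tauto) (by tauto)).symm, nAqz, w, hw.1, hw.2⟩
  · rcases hL2 with ⟨-, Aqz, nApz, nSpz, -, -⟩ | ⟨-, h, -, -, -, -⟩
    swap
    · exact absurd h nAqy
    rcases hL3 with ⟨-, Ary, -, -, nArx, -⟩ | ⟨h, -⟩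
    swap
    · exact absurd h nAqy
    rcases hL4 with ⟨h, -⟩ | ⟨-, -, -, -, nArz, -⟩
    · exact absurd h nAqy
    refine Or.inr ⟨⟨⟨?_, ?_, ?_, ?_, ?_⟩, Apy, Ary, Aqx, Aqz⟩, ?_, ?_, ?_⟩
    · exact res p x (by tauto) (by tauto) nApx
    · exact res r x (by tauto) (by tauto) nArx
    · exact res p z (by tauto) (by tauto) nApz
    · exact res r z (by tauto) (by tauto) nArz
    · exact res q y (by tauto) (by tauto) nAqy
    · exact fun w hw => nSpx ⟨(hne p x (by tauto) (by tauto)).symm, nApx, w, hw.1, hw.2⟩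
    · exact fun w hw => nSpz ⟨(hne p z (by tauto) (by tauto)).symm, nApz, w, hw.1, hw.2⟩
    · exact fun w hw => nSqy ⟨(hne q y (by tauto) (by tauto)).symm, nAqy, w, hw.1, hw.2⟩

/-- Propagation step: the half-pattern between path `p₀q₀r₀` and path `pqr`, together
with the full pattern and restrictions between consecutive paths `pqr` and `xyz`,
yields the half-pattern between `p₀q₀r₀` and `xyz`. -/
lemma step_lemma (A : V → V → Prop) (p0 q0 r0 p q r x y z : V)
    (hadj : ∀ u v, (u = x ∨ u = y ∨ u = z) → (v = p0 ∨ v = q0 ∨ v = r0) → A u v ∨ A v u)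
    (hinv : JpP A p0 q0 r0 p q r ∨ HpP A p0 q0 r0 p q r)
    (hcon : (FpP A p q r x y z ∧ NS A p y ∧ NS A q x ∧ NS A q z) ∨
            (FpP A x y z p q r ∧ NS A p x ∧ NS A p z ∧ NS A q y)) :
    JpP A p0 q0 r0 x y z ∨ HpP A p0 q0 r0 x y z := by
  simp only [FpP, HpP, JpP, NS] at hinv hcon ⊢
  have res : ∀ u v, (u = x ∨ u = y ∨ u = z) → (v = p0 ∨ v = q0 ∨ v = r0) →
      ¬ A v u → A u v := fun u v hu hv h => (hadj u v hu hv).resolve_right h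
  rcases hcon with ⟨-, nsPY, nsQX, nsQZ⟩ | ⟨-, nsPX, nsPZ, nsQY⟩
  · rcases hinv with ⟨hpq0, hrq0, hqp0, hqr0⟩ | ⟨hpp0, hpr0, hrp0, hrr0, hqq0⟩
    · refine Or.inr ⟨?_, ?_, ?_, ?_, ?_⟩
      · exact res x p0 (by tauto) (by tauto) (fun h => nsQX p0 ⟨hqp0, h⟩)
      · exact res x r0 (by tauto) (by tauto) (fun h => nsQX r0 ⟨hqr0, h⟩)
      · exact res z p0 (by tauto) (by tauto) (fun h => nsQZ p0 ⟨hqp0, h⟩)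
      · exact res z r0 (by tauto) (by tauto) (fun h => nsQZ r0 ⟨hqr0, h⟩)
      · exact res y q0 (by tauto) (by tauto) (fun h => nsPY q0 ⟨hpq0, h⟩)
    · refine Or.inl ⟨?_, ?_, ?_, ?_⟩
      · exact res x q0 (by tauto) (by tauto) (fun h => nsQX q0 ⟨hqq0, h⟩)
      · exact res z q0 (by tauto) (by tauto) (fun h => nsQZ q0 ⟨hqq0, h⟩)
      · exact res y p0 (by tauto) (by tauto) (fun h => nsPY p0 ⟨hpp0, h⟩)
      · exact res y r0 (by tauto) (by tauto) (fun h => nsPY r0 ⟨hpr0, h⟩)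
  · rcases hinv with ⟨hpq0, hrq0, hqp0, hqr0⟩ | ⟨hpp0, hpr0, hrp0, hrr0, hqq0⟩
    · refine Or.inl ⟨?_, ?_, ?_, ?_⟩
      · exact res x q0 (by tauto) (by tauto) (fun h => nsPX q0 ⟨hpq0, h⟩)
      · exact res z q0 (by tauto) (by tauto) (fun h => nsPZ q0 ⟨hpq0, h⟩)
      · exact res y p0 (by tauto) (by tauto) (fun h => nsQY p0 ⟨hqp0, h⟩)
      · exact res y r0 (by tauto) (by tauto) (fun h => nsQY r0 ⟨hqr0, h⟩)
    · refine Or.inr ⟨?_, ?_, ?_, ?_, ?_⟩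
      · exact res x p0 (by tauto) (by tauto) (fun h => nsPX p0 ⟨hpp0, h⟩)
      · exact res x r0 (by tauto) (by tauto) (fun h => nsPX r0 ⟨hpr0, h⟩)
      · exact res z p0 (by tauto) (by tauto) (fun h => nsPZ p0 ⟨hpp0, h⟩)
      · exact res z r0 (by tauto) (by tauto) (fun h => nsPZ r0 ⟨hpr0, h⟩)
      · exact res y q0 (by tauto) (by tauto) (fun h => nsQY q0 ⟨hqq0, h⟩)

/-- Corollary 4.10. -/
theorem stmt9 {V : Type*} [Fintype V] (A : V → V → Prop) (hA : Oriented A)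
    (hP : MissingPaths2 A) (k : ℕ) (a b c : ZMod k → V)
    (hC : IsDoubleCycle A k a b c) (K : Set V) (hK : K = Kset a b c) :
    ∀ t i, i ≠ t →
      (((a i ∈ outIn A K (a t) ∪ outIn A K (c t) ∪ inIn A K (b t)) ↔
        (c i ∈ outIn A K (a t) ∪ outIn A K (c t) ∪ inIn A K (b t))) ∧
       ((c i ∈ outIn A K (a t) ∪ outIn A K (c t) ∪ inIn A K (b t)) ↔
        (({a i, c i} : Set V) ⊆ outIn A K (a t) ∩ outIn A K (c t) ∩ inIn A K (b t))) ∧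
       ((({a i, c i} : Set V) ⊆ outIn A K (a t) ∩ outIn A K (c t) ∩ inIn A K (b t)) ↔
        (b i ∈ inIn A K (a t) ∪ inIn A K (c t) ∪ outIn A K (b t))) ∧
       ((b i ∈ inIn A K (a t) ∪ inIn A K (c t) ∪ outIn A K (b t)) ↔
        (b i ∈ inIn A K (a t) ∩ inIn A K (c t) ∩ outIn A K (b t)))) ∧
      (((a i ∈ inIn A K (a t) ∪ inIn A K (c t) ∪ outIn A K (b t)) ↔
        (c i ∈ inIn A K (a t) ∪ inIn A K (c t) ∪ outIn A K (b t))) ∧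
       ((c i ∈ inIn A K (a t) ∪ inIn A K (c t) ∪ outIn A K (b t)) ↔
        (({a i, c i} : Set V) ⊆ inIn A K (a t) ∩ inIn A K (c t) ∩ outIn A K (b t))) ∧
       ((({a i, c i} : Set V) ⊆ inIn A K (a t) ∩ inIn A K (c t) ∩ outIn A K (b t)) ↔
        (b i ∈ outIn A K (a t) ∪ outIn A K (c t) ∪ inIn A K (b t))) ∧
       ((b i ∈ outIn A K (a t) ∪ outIn A K (c t) ∪ inIn A K (b t)) ↔
        (b i ∈ outIn A K (a t) ∩ outIn A K (c t) ∩ inIn A K (b t)))) := by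
  subst hK
  obtain ⟨hk2, hmiss, hdisj, hlose⟩ := hC
  haveI : NeZero k := ⟨by omega⟩
  have hneq : ∀ i j : ZMod k, i ≠ j → ∀ u v : V,
      (u = a i ∨ u = b i ∨ u = c i) → (v = a j ∨ v = b j ∨ v = c j) → u ≠ v := by
    intro i j hij u v hu hv
    have hu' : u ∈ ({a i, b i, c i} : Set V) := by rcases hu with rfl | rfl | rfl <;> simp
    have hv' : v ∈ ({a j, b j, c j} : Set V) := by rcases hv with rfl | rfl | rfl <;> simp
    intro h
    exact Set.disjoint_left.mp (hdisj i j hij) hu' (h ▸ hv')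
  have hkey : ∀ i : ZMod k, {w | IsMissing A (a i) w} = {b i} ∧
      {w | IsMissing A (b i) w} = {a i, c i} ∧ {w | IsMissing A (c i) w} = {b i} := by
    intro i
    obtain ⟨m1, m2, hac⟩ := hmiss i
    have m1' : IsMissing A (b i) (a i) := ⟨m1.1.symm, m1.2.2, m1.2.1⟩
    have m2' : IsMissing A (c i) (b i) := ⟨m2.1.symm, m2.2.2, m2.2.1⟩
    have hsub : ({a i, c i} : Set V) ⊆ {w | IsMissing A (b i) w} := by
      rintro v (rfl | rfl)
      · exact m1'
      · exact m2
    have h2le : 2 ≤ mdeg A (b i) := by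
      have h := Set.ncard_le_ncard hsub (Set.toFinite _)
      rwa [Set.ncard_pair hac] at h
    have h1 := hP _ _ m1
    have h2 := hP _ _ m2
    have hb2 : mdeg A (b i) = 2 := by
      rcases h1 with ⟨-, h⟩ | ⟨-, h⟩
      · exact h
      · omega
    have ha1 : mdeg A (a i) = 1 := by
      rcases h1 with ⟨h, -⟩ | ⟨-, h⟩
      · exact h
      · omega
    have hc1 : mdeg A (c i) = 1 := by
      rcases h2 with ⟨h, -⟩ | ⟨-, h⟩
      · omega
      · exact h
    refine ⟨?_, ?_, ?_⟩
    · obtain ⟨w, hw⟩ := Set.ncard_eq_one.mp ha1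
      have hb : b i ∈ {w | IsMissing A (a i) w} := m1
      rw [hw] at hb ⊢
      rw [Set.mem_singleton_iff] at hb
      rw [hb]
    · exact (Set.eq_of_subset_of_ncard_le hsub
        (by rw [Set.ncard_pair hac]; exact le_of_eq hb2) (Set.toFinite _)).symm
    · obtain ⟨w, hw⟩ := Set.ncard_eq_one.mp hc1
      have hb : b i ∈ {w | IsMissing A (c i) w} := m2'
      rw [hw] at hb ⊢
      rw [Set.mem_singleton_iff] at hb
      rw [hb]
  have hadj : ∀ i j : ZMod k, i ≠ j → ∀ u v : V,
      (u = a i ∨ u = b i ∨ u = c i) → (v = a j ∨ v = b j ∨ v = c j) → A u v ∨ A v u := by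
    intro i j hij u v hu hv
    by_contra hcon
    push_neg at hcon
    have hm : IsMissing A u v := ⟨hneq i j hij u v hu hv, hcon.1, hcon.2⟩
    obtain ⟨e1, e2, e3⟩ := hkey i
    have hv2 : v ∈ ({a i, b i, c i} : Set V) := by
      rcases hu with rfl | rfl | rfl
      · have hx : v ∈ {w | IsMissing A (a i) w} := hm
        rw [e1, Set.mem_singleton_iff] at hx
        simp [hx]
      · have hx : v ∈ {w | IsMissing A (b i) w} := hm
        rw [e2] at hx
        simp only [Set.mem_insert_iff, Set.mem_singleton_iff] at hx
        rcases hx with rfl | rfl <;> simp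
      · have hx : v ∈ {w | IsMissing A (c i) w} := hm
        rw [e3, Set.mem_singleton_iff] at hx
        simp [hx]
    have hv3 : v ∈ ({a j, b j, c j} : Set V) := by rcases hv with rfl | rfl | rfl <;> simp
    exact Set.disjoint_left.mp (hdisj i j hij) hv2 hv3
  have hstep_ne : ∀ m : ZMod k, m ≠ m + 1 := by
    intro m h
    have h1 : ((1 : ℕ) : ZMod k) = 0 := by
      have h0 := left_eq_add.mp h
      simpa using h0
    rw [ZMod.natCast_eq_zero_iff] at h1
    have := Nat.le_of_dvd (by omega) h1
    omega
  have hcast_ne : ∀ d : ℕ, 1 ≤ d → d < k → (d : ZMod k) ≠ 0 := by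
    intro d h1 h2 h
    rw [ZMod.natCast_eq_zero_iff] at h
    have := Nat.le_of_dvd (by omega) h
    omega
  have hofs_ne : ∀ (t : ZMod k) (d : ℕ), 1 ≤ d → d < k → t ≠ t + (d : ZMod k) := by
    intro t d h1 h2 h
    exact hcast_ne d h1 h2 (left_eq_add.mp h)
  have hconsec : ∀ m : ZMod k,
      (FpP A (a m) (b m) (c m) (a (m+1)) (b (m+1)) (c (m+1)) ∧
        NS A (a m) (b (m+1)) ∧ NS A (b m) (a (m+1)) ∧ NS A (b m) (c (m+1))) ∨
      (FpP A (a (m+1)) (b (m+1)) (c (m+1)) (a m) (b m) (c m) ∧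
        NS A (a m) (a (m+1)) ∧ NS A (a m) (c (m+1)) ∧ NS A (b m) (b (m+1))) := by
    intro m
    obtain ⟨l1, l2, l3, l4⟩ := hlose m
    exact consec_lemma A _ _ _ _ _ _ (hneq m (m+1) (hstep_ne m))
      (hadj m (m+1) (hstep_ne m)) l1 l2 l3 l4
  have hinv : ∀ d : ℕ, ∀ t : ZMod k, 1 ≤ d → d < k →
      JpP A (a t) (b t) (c t) (a (t + (d : ZMod k))) (b (t + (d : ZMod k)))
        (c (t + (d : ZMod k))) ∨
      HpP A (a t) (b t) (c t) (a (t + (d : ZMod k))) (b (t + (d : ZMod k)))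
        (c (t + (d : ZMod k))) := by
    intro d
    induction d with
    | zero => intro t h1 h2; exact absurd h1 (by omega)
    | succ d ih =>
      intro t h1 h2
      rcases Nat.eq_zero_or_pos d with rfl | hd
      · have hc1 : ((0 + 1 : ℕ) : ZMod k) = 1 := by norm_num
        rw [hc1]
        rcases hconsec t with ⟨hF, -⟩ | ⟨hF, -⟩
        · exact Or.inl hF.2
        · exact Or.inr hF.1
      · have hm := ih t (by omega) (by omega)
        have hj : t + ((d + 1 : ℕ) : ZMod k) = (t + (d : ZMod k)) + 1 := by push_cast; ring
        rw [hj]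
        have hjt : (t + (d : ZMod k)) + 1 ≠ t := by
          rw [← hj]
          exact (hofs_ne t (d + 1) (by omega) h2).symm
        exact step_lemma A _ _ _ _ _ _ _ _ _
          (hadj ((t + (d : ZMod k)) + 1) t hjt) hm (hconsec (t + (d : ZMod k)))
  have hfull : ∀ t i : ZMod k, i ≠ t →
      FpP A (a t) (b t) (c t) (a i) (b i) (c i) ∨
      FpP A (a i) (b i) (c i) (a t) (b t) (c t) := by
    intro t i hit
    have h1 : i - t ≠ 0 := sub_ne_zero.mpr hit
    have h2 : t - i ≠ 0 := sub_ne_zero.mpr (Ne.symm hit)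
    have e1 : t + (((i - t).val : ℕ) : ZMod k) = i := by
      rw [ZMod.natCast_val, ZMod.cast_id]; ring
    have e2 : i + (((t - i).val : ℕ) : ZMod k) = t := by
      rw [ZMod.natCast_val, ZMod.cast_id]; ring
    have b1 : 1 ≤ (i - t).val :=
      Nat.one_le_iff_ne_zero.mpr (fun h => h1 ((ZMod.val_eq_zero _).mp h))
    have b2 : 1 ≤ (t - i).val :=
      Nat.one_le_iff_ne_zero.mpr (fun h => h2 ((ZMod.val_eq_zero _).mp h))
    have A1 := hinv (i - t).val t b1 (ZMod.val_lt _)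
    have A2 := hinv (t - i).val i b2 (ZMod.val_lt _)
    rw [e1] at A1
    rw [e2] at A2
    simp only [JpP, HpP] at A1 A2
    simp only [FpP, JpP, HpP]
    rcases A1 with ⟨j1, j2, j3, j4⟩ | ⟨g1, g2, g3, g4, g5⟩
    · rcases A2 with ⟨j1', j2', j3', j4'⟩ | ⟨g1', g2', g3', g4', g5'⟩
      · exact absurd j1' (hA _ _ j3)
      · exact Or.inl ⟨⟨g1', g2', g3', g4', g5'⟩, j1, j2, j3, j4⟩
    · rcases A2 with ⟨j1', j2', j3', j4'⟩ | ⟨g1', g2', g3', g4', g5'⟩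
      · exact Or.inr ⟨⟨g1, g2, g3, g4, g5⟩, j1', j2', j3', j4'⟩
      · exact absurd g1' (hA _ _ g1)
  intro t i hit
  have hKa : a i ∈ Kset a b c := ⟨i, Or.inl rfl⟩
  have hKb : b i ∈ Kset a b c := ⟨i, Or.inr (Or.inl rfl)⟩
  have hKc : c i ∈ Kset a b c := ⟨i, Or.inr (Or.inr rfl)⟩
  rcases hfull t i hit with hF | hF <;>
    [obtain ⟨⟨h1, h2, h3, h4, h5⟩, h6, h7, h8, h9⟩ :=
      (by simpa only [FpP, JpP, HpP] using hF :
        (A (a t) (a i) ∧ A (a t) (c i) ∧ A (c t) (a i) ∧ A (c t) (c i) ∧ A (b t) (b i)) ∧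
        A (a i) (b t) ∧ A (c i) (b t) ∧ A (b i) (a t) ∧ A (b i) (c t));
     obtain ⟨⟨h1, h2, h3, h4, h5⟩, h6, h7, h8, h9⟩ :=
      (by simpa only [FpP, JpP, HpP] using hF :
        (A (a i) (a t) ∧ A (a i) (c t) ∧ A (c i) (a t) ∧ A (c i) (c t) ∧ A (b i) (b t)) ∧
        A (a t) (b i) ∧ A (c t) (b i) ∧ A (b t) (a i) ∧ A (b t) (c i))] <;>
  · have n1 := hA _ _ h1
    have n2 := hA _ _ h2
    have n3 := hA _ _ h3
    have n4 := hA _ _ h4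
    have n5 := hA _ _ h5
    have n6 := hA _ _ h6
    have n7 := hA _ _ h7
    have n8 := hA _ _ h8
    have n9 := hA _ _ h9
    simp only [outIn, inIn, Set.mem_union, Set.mem_setOf_eq, Set.mem_inter_iff,
      Set.insert_subset_iff, Set.singleton_subset_iff]
    tauto

end SSNC
end

section
/- Let D be a tournament missing disjoint paths of length 2 and let C = a_1b_1c_1, …, a_kb_kc_k be a double cycle in Δ(D). For every t ∈ {1,…,k} (indices modulo k, so index k+1 means 1), with all neighborhoods taken in the induced subdigraph D[K(C)]: (1) N⁺⁺(a_t) = (N⁻(a_t) ∪ {b_t}) ∖ {a_{t+1}, b_{t+1}, c_{t+1}, c_t}; (2) N⁺⁺(c_t) = (N⁻(c_t) ∪ {b_t}) ∖ {a_{t+1}, b_{t+1}, c_{t+1}, a_t}; (3) N⁺⁺(b_t) = (N⁻(b_t) ∪ {a_t, c_t}) ∖ {a_{t+1}, b_{t+1}, c_{t+1}}. -/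
namespace SSNC

variable {V : Type*}

section Aux
variable (A : V → V → Prop) {k : ℕ} (a b c : ZMod k → V)

def PatX (t : ZMod k) : Prop :=
  A (a t) (b (t+1)) ∧ A (b t) (a (t+1)) ∧ A (b t) (c (t+1)) ∧ A (c t) (b (t+1)) ∧
  A (a (t+1)) (a t) ∧ A (a (t+1)) (c t) ∧ A (c (t+1)) (a t) ∧ A (c (t+1)) (c t) ∧
  A (b (t+1)) (b t) ∧
  ¬ SecondOut A (a t) (a (t+1)) ∧ ¬ SecondOut A (a t) (c (t+1)) ∧
  ¬ SecondOut A (b t) (b (t+1)) ∧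
  ¬ SecondOut A (c t) (a (t+1)) ∧ ¬ SecondOut A (c t) (c (t+1))

def PatP (t : ZMod k) : Prop :=
  A (a t) (a (t+1)) ∧ A (a t) (c (t+1)) ∧ A (b t) (b (t+1)) ∧ A (c t) (a (t+1)) ∧
  A (c t) (c (t+1)) ∧
  A (b (t+1)) (a t) ∧ A (b (t+1)) (c t) ∧ A (a (t+1)) (b t) ∧ A (c (t+1)) (b t) ∧
  ¬ SecondOut A (a t) (b (t+1)) ∧ ¬ SecondOut A (b t) (a (t+1)) ∧
  ¬ SecondOut A (b t) (c (t+1)) ∧ ¬ SecondOut A (c t) (b (t+1))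

def Pat : Bool → ZMod k → Prop
  | false, t => PatX A a b c t
  | true, t => PatP A a b c t

def BK : Bool → ZMod k → ZMod k → Prop
  | false, i, j => A (a j) (a i) ∧ A (a j) (c i) ∧ A (c j) (a i) ∧ A (c j) (c i) ∧ A (b j) (b i)
  | true, i, j => A (b j) (a i) ∧ A (b j) (c i) ∧ A (a j) (b i) ∧ A (c j) (b i)

end Aux

def tau {k : ℕ} (p : ZMod k → Bool) : ZMod k → ℕ → Bool
  | _, 0 => false
  | t, n+1 => xor (p t) (tau p (t+1) n)


lemma tau_add {k : ℕ} (p : ZMod k → Bool) :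
    ∀ (m : ℕ) (n : ℕ) (t : ZMod k), tau p t (m + n) = xor (tau p t m) (tau p (t + (m:ℕ)) n) := by
  intro m
  induction m with
  | zero => intro n t; simp [tau]
  | succ m ih =>
    intro n t
    have h1 : m + 1 + n = (m + n) + 1 := by omega
    rw [h1]
    show xor (p t) (tau p (t+1) (m + n)) = _
    rw [ih n (t+1)]
    have h2 : t + 1 + (m:ℕ) = t + ((m+1 : ℕ) : ZMod k) := by push_cast; ring
    rw [h2]
    show _ = xor (xor (p t) (tau p (t+1) m)) _
    rw [Bool.xor_assoc]

lemma force {A : V → V → Prop} {v u' w : V} (hnso : ¬ SecondOut A v u')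
    (hne : u' ≠ v) (hvu' : ¬ A v u') (hwu' : A w u') (ht : ¬ A v w → A w v) : A w v :=
  ht fun hvw => hnso ⟨hne, hvu', w, hvw, hwu'⟩


lemma KEY {k : ℕ} (A : V → V → Prop) (a b c : ZMod k → V) (p : ZMod k → Bool) (K : Set V)
    (hA : Oriented A)
    (hk1 : (1 : ZMod k) ≠ 0)
    (hKm : ∀ i : ZMod k, a i ∈ K ∧ b i ∈ K ∧ c i ∈ K)
    (hKa : ∀ u ∈ K, ∃ i : ZMod k, u = a i ∨ u = b i ∨ u = c i)
    (hmis : ∀ i : ZMod k, ¬ A (a i) (b i) ∧ ¬ A (b i) (a i) ∧ ¬ A (b i) (c i) ∧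
      ¬ A (c i) (b i) ∧ a i ≠ b i ∧ b i ≠ c i ∧ a i ≠ c i)
    (hac : ∀ i : ZMod k, A (a i) (c i) ∨ A (c i) (a i))
    (htot : ∀ i j : ZMod k, i ≠ j → ∀ u, (u = a i ∨ u = b i ∨ u = c i) →
      ∀ v, (v = a j ∨ v = b j ∨ v = c j) → ¬ A u v → A v u)
    (hp : ∀ t, Pat A a b c (p t) t)
    (hstr : ∀ i j, i ≠ j → BK A a b c (tau p i ((j - i).val)) i j ∧
      BK A a b c (!(tau p i ((j - i).val))) j i)
    (herec : ∀ t j : ZMod k, j ≠ t → j ≠ t + 1 →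
      tau p t ((j - t).val) = xor (p t) (tau p (t+1) ((j - (t+1)).val))) :
    ∀ t, secondOutIn A K (a t) =
      (inIn A K (a t) ∪ {b t}) \ {a (t + 1), b (t + 1), c (t + 1), c t} := by
  intro t
  have irrefl : ∀ v, ¬ A v v := fun v h => hA v v h h
  have htt1 : t ≠ t + 1 := fun h => hk1 (left_eq_add.mp h)
  ext u
  simp only [secondOutIn, inIn, Set.mem_setOf_eq, Set.mem_diff, Set.mem_union,
    Set.mem_insert_iff, Set.mem_singleton_iff]
  constructor
  · rintro ⟨huK, hune, hnAu, w, hwK, haw, hwu⟩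
    constructor
    · by_cases h : A u (a t)
      · exact Or.inl ⟨huK, h⟩
      · obtain ⟨i, hu⟩ := hKa u huK
        by_cases hit : i = t
        · subst hit
          rcases hu with rfl | rfl | rfl
          · exact absurd rfl hune
          · exact Or.inr rfl
          · rcases hac i with h1 | h1
            · exact absurd h1 hnAu
            · exact absurd h1 h
        · exact absurd (htot i t hit u hu (a t) (Or.inl rfl) h) hnAu
    · have hct : ¬ (u = c t) := by
        rintro rfl
        obtain ⟨i, hw⟩ := hKa w hwK
        by_cases hit : i = t
        · subst hit
          rcases hw with rfl | rfl | rfl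
          · exact irrefl _ haw
          · exact (hmis i).1 haw
          · exact irrefl _ hwu
        · by_cases hit1 : i = t + 1
          · subst hit1
            have h := hp t
            cases hpt : p t <;> rw [hpt] at h <;> simp only [Pat] at h
            · obtain ⟨axy, bxx, bxz, cxy, xa, xc, za, zc, yb, -⟩ := h
              rcases hw with rfl | rfl | rfl
              · exact hA _ _ xa haw
              · exact hA _ _ cxy hwu
              · exact hA _ _ za haw
            · obtain ⟨pax, paz, pby, pcx, pcz, qya, qyc, qxb, qzb, -⟩ := h
              rcases hw with rfl | rfl | rfl
              · exact hA _ _ pcx hwu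
              · exact hA _ _ qya haw
              · exact hA _ _ pcz hwu
          · have hti : t ≠ i := fun h => hit h.symm
            obtain ⟨hB1, hB2⟩ := hstr t i hti
            cases hE : tau p t ((i - t).val) <;> rw [hE] at hB1 hB2 <;>
              simp only [Bool.not_false, Bool.not_true] at hB2 <;>
              simp only [BK] at hB1 hB2
            · obtain ⟨u1, u2, u3, u4, u5⟩ := hB1
              obtain ⟨v1, v2, v3, v4⟩ := hB2
              rcases hw with rfl | rfl | rfl
              · exact hA _ _ u1 haw
              · exact hA _ _ v4 hwu
              · exact hA _ _ u3 haw
            · obtain ⟨u1, u2, u3, u4⟩ := hB1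
              obtain ⟨v1, v2, v3, v4, v5⟩ := hB2
              rcases hw with rfl | rfl | rfl
              · exact hA _ _ v3 hwu
              · exact hA _ _ u1 haw
              · exact hA _ _ v4 hwu
      have h := hp t
      rintro (rfl | rfl | rfl | h')
      · cases hpt : p t <;> rw [hpt] at h <;> simp only [Pat] at h
        · exact h.2.2.2.2.2.2.2.2.2.1 ⟨hune, hnAu, w, haw, hwu⟩
        · exact hnAu h.1
      · cases hpt : p t <;> rw [hpt] at h <;> simp only [Pat] at h
        · exact hnAu h.1
        · exact h.2.2.2.2.2.2.2.2.2.1 ⟨hune, hnAu, w, haw, hwu⟩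
      · cases hpt : p t <;> rw [hpt] at h <;> simp only [Pat] at h
        · exact h.2.2.2.2.2.2.2.2.2.2.1 ⟨hune, hnAu, w, haw, hwu⟩
        · exact hnAu h.2.1
      · exact hct h'
  · rintro ⟨hu1, hu2⟩
    push_neg at hu2
    obtain ⟨hux, huy, huz, huc⟩ := hu2
    have h := hp t
    rcases hu1 with ⟨huK, hua⟩ | rfl
    · have hune : u ≠ a t := fun heq => irrefl _ (heq ▸ hua)
      have hnAau : ¬ A (a t) u := fun h' => hA _ _ h' hua
      refine ⟨huK, hune, hnAau, ?_⟩
      obtain ⟨i, hu⟩ := hKa u huK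
      by_cases hit : i = t
      · subst hit
        rcases hu with rfl | rfl | rfl
        · exact absurd rfl hune
        · exact absurd hua (hmis i).2.1
        · exact absurd rfl huc
      · by_cases hit1 : i = t + 1
        · subst hit1
          rcases hu with rfl | rfl | rfl
          · exact absurd rfl hux
          · exact absurd rfl huy
          · exact absurd rfl huz
        · have hti : t ≠ i := fun h' => hit h'.symm
          have ht1i : t + 1 ≠ i := fun h' => hit1 h'.symm
          obtain ⟨hB1, hB2⟩ := hstr t i hti
          obtain ⟨hC1, hC2⟩ := hstr (t+1) i ht1i
          have hrec := herec t i hit hit1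
          cases hpt : p t
          · rw [hpt] at h hrec
            simp only [Pat] at h
            obtain ⟨axy, bxx, bxz, cxy, xa, xc, za, zc, yb, -⟩ := h
            cases hE : tau p (t+1) ((i - (t+1)).val)
            · rw [hE] at hrec hC1 hC2
              simp only [Bool.false_xor] at hrec
              rw [hrec] at hB1 hB2
              simp only [Bool.not_false] at hB2 hC2
              simp only [BK] at hB1 hB2 hC1 hC2
              rcases hu with rfl | rfl | rfl
              · exact ⟨b (t+1), (hKm (t+1)).2.1, axy, hC2.1⟩
              · exact absurd hua (hA _ _ hB2.2.2.1)
              · exact ⟨b (t+1), (hKm (t+1)).2.1, axy, hC2.2.1⟩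
            · rw [hE] at hrec hC1 hC2
              simp only [Bool.false_xor] at hrec
              rw [hrec] at hB1 hB2
              simp only [Bool.not_true] at hB2 hC2
              simp only [BK] at hB1 hB2 hC1 hC2
              rcases hu with rfl | rfl | rfl
              · exact absurd hua (hA _ _ hB2.1)
              · exact ⟨b (t+1), (hKm (t+1)).2.1, axy, hC2.2.2.2.2⟩
              · exact absurd hua (hA _ _ hB2.2.1)
          · rw [hpt] at h hrec
            simp only [Pat] at h
            obtain ⟨pax, paz, pby, pcx, pcz, qya, qyc, qxb, qzb, -⟩ := h
            cases hE : tau p (t+1) ((i - (t+1)).val)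
            · rw [hE] at hrec hC1 hC2
              simp only [Bool.xor_false] at hrec
              rw [hrec] at hB1 hB2
              simp only [Bool.not_true, Bool.not_false] at hB2 hC2
              simp only [BK] at hB1 hB2 hC1 hC2
              rcases hu with rfl | rfl | rfl
              · exact absurd hua (hA _ _ hB2.1)
              · exact ⟨a (t+1), (hKm (t+1)).1, pax, hC2.2.2.1⟩
              · exact absurd hua (hA _ _ hB2.2.1)
            · rw [hE] at hrec hC1 hC2
              simp only [Bool.true_xor, Bool.not_true] at hrec
              rw [hrec] at hB1 hB2
              simp only [Bool.not_true, Bool.not_false] at hB2 hC2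
              simp only [BK] at hB1 hB2 hC1 hC2
              rcases hu with rfl | rfl | rfl
              · exact ⟨a (t+1), (hKm (t+1)).1, pax, hC2.1⟩
              · exact absurd hua (hA _ _ hB2.2.2.1)
              · exact ⟨a (t+1), (hKm (t+1)).1, pax, hC2.2.1⟩
    · refine ⟨(hKm t).2.1, Ne.symm (hmis t).2.2.2.2.1, (hmis t).1, ?_⟩
      cases hpt : p t <;> rw [hpt] at h <;> simp only [Pat] at h
      · exact ⟨b (t+1), (hKm (t+1)).2.1, h.1, h.2.2.2.2.2.2.2.2.1⟩
      · exact ⟨a (t+1), (hKm (t+1)).1, h.1, h.2.2.2.2.2.2.2.1⟩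

lemma KEYB {k : ℕ} (A : V → V → Prop) (a b c : ZMod k → V) (p : ZMod k → Bool) (K : Set V)
    (hA : Oriented A)
    (hk1 : (1 : ZMod k) ≠ 0)
    (hKm : ∀ i : ZMod k, a i ∈ K ∧ b i ∈ K ∧ c i ∈ K)
    (hKa : ∀ u ∈ K, ∃ i : ZMod k, u = a i ∨ u = b i ∨ u = c i)
    (hmis : ∀ i : ZMod k, ¬ A (a i) (b i) ∧ ¬ A (b i) (a i) ∧ ¬ A (b i) (c i) ∧
      ¬ A (c i) (b i) ∧ a i ≠ b i ∧ b i ≠ c i ∧ a i ≠ c i)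
    (htot : ∀ i j : ZMod k, i ≠ j → ∀ u, (u = a i ∨ u = b i ∨ u = c i) →
      ∀ v, (v = a j ∨ v = b j ∨ v = c j) → ¬ A u v → A v u)
    (hp : ∀ t, Pat A a b c (p t) t)
    (hstr : ∀ i j, i ≠ j → BK A a b c (tau p i ((j - i).val)) i j ∧
      BK A a b c (!(tau p i ((j - i).val))) j i)
    (herec : ∀ t j : ZMod k, j ≠ t → j ≠ t + 1 →
      tau p t ((j - t).val) = xor (p t) (tau p (t+1) ((j - (t+1)).val))) :
    ∀ t, secondOutIn A K (b t) =
      (inIn A K (b t) ∪ {a t, c t}) \ {a (t + 1), b (t + 1), c (t + 1)} := by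
  intro t
  have irrefl : ∀ v, ¬ A v v := fun v h => hA v v h h
  have htt1 : t ≠ t + 1 := fun h => hk1 (left_eq_add.mp h)
  ext u
  simp only [secondOutIn, inIn, Set.mem_setOf_eq, Set.mem_diff, Set.mem_union,
    Set.mem_insert_iff, Set.mem_singleton_iff]
  constructor
  · rintro ⟨huK, hune, hnAu, w, hwK, hbw, hwu⟩
    constructor
    · by_cases h : A u (b t)
      · exact Or.inl ⟨huK, h⟩
      · obtain ⟨i, hu⟩ := hKa u huK
        by_cases hit : i = t
        · subst hit
          rcases hu with rfl | rfl | rfl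
          · exact Or.inr (Or.inl rfl)
          · exact absurd rfl hune
          · exact Or.inr (Or.inr rfl)
        · exact absurd (htot i t hit u hu (b t) (Or.inr (Or.inl rfl)) h) hnAu
    · have h := hp t
      rintro (rfl | rfl | rfl)
      · cases hpt : p t <;> rw [hpt] at h <;> simp only [Pat] at h
        · exact hnAu h.2.1
        · exact h.2.2.2.2.2.2.2.2.2.2.1 ⟨hune, hnAu, w, hbw, hwu⟩
      · cases hpt : p t <;> rw [hpt] at h <;> simp only [Pat] at h
        · exact h.2.2.2.2.2.2.2.2.2.2.2.1 ⟨hune, hnAu, w, hbw, hwu⟩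
        · exact hnAu h.2.2.1
      · cases hpt : p t <;> rw [hpt] at h <;> simp only [Pat] at h
        · exact hnAu h.2.2.1
        · exact h.2.2.2.2.2.2.2.2.2.2.2.1 ⟨hune, hnAu, w, hbw, hwu⟩
  · rintro ⟨hu1, hu2⟩
    push_neg at hu2
    obtain ⟨hux, huy, huz⟩ := hu2
    have h := hp t
    rcases hu1 with ⟨huK, hub⟩ | (rfl | rfl)
    · have hune : u ≠ b t := fun heq => irrefl _ (heq ▸ hub)
      have hnAbu : ¬ A (b t) u := fun h' => hA _ _ h' hub
      refine ⟨huK, hune, hnAbu, ?_⟩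
      obtain ⟨i, hu⟩ := hKa u huK
      by_cases hit : i = t
      · subst hit
        rcases hu with rfl | rfl | rfl
        · exact absurd hub (hmis i).1
        · exact absurd rfl hune
        · exact absurd hub (hmis i).2.2.2.1
      · by_cases hit1 : i = t + 1
        · subst hit1
          rcases hu with rfl | rfl | rfl
          · exact absurd rfl hux
          · exact absurd rfl huy
          · exact absurd rfl huz
        · have hti : t ≠ i := fun h' => hit h'.symm
          have ht1i : t + 1 ≠ i := fun h' => hit1 h'.symm
          obtain ⟨hB1, hB2⟩ := hstr t i hti
          obtain ⟨hC1, hC2⟩ := hstr (t+1) i ht1i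
          have hrec := herec t i hit hit1
          cases hpt : p t
          · rw [hpt] at h hrec
            simp only [Pat] at h
            obtain ⟨axy, bxx, bxz, cxy, xa, xc, za, zc, yb, -⟩ := h
            cases hE : tau p (t+1) ((i - (t+1)).val)
            · rw [hE] at hrec hC1 hC2
              simp only [Bool.false_xor] at hrec
              rw [hrec] at hB1 hB2
              simp only [Bool.not_false] at hB2 hC2
              simp only [BK] at hB1 hB2 hC1 hC2
              rcases hu with rfl | rfl | rfl
              · exact absurd hub (hA _ _ hB2.1)
              · exact ⟨a (t+1), (hKm (t+1)).1, bxx, hC2.2.2.1⟩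
              · exact absurd hub (hA _ _ hB2.2.1)
            · rw [hE] at hrec hC1 hC2
              simp only [Bool.false_xor] at hrec
              rw [hrec] at hB1 hB2
              simp only [Bool.not_true] at hB2 hC2
              simp only [BK] at hB1 hB2 hC1 hC2
              rcases hu with rfl | rfl | rfl
              · exact ⟨a (t+1), (hKm (t+1)).1, bxx, hC2.1⟩
              · exact absurd hub (hA _ _ hB2.2.2.2.2)
              · exact ⟨a (t+1), (hKm (t+1)).1, bxx, hC2.2.1⟩
          · rw [hpt] at h hrec
            simp only [Pat] at h
            obtain ⟨pax, paz, pby, pcx, pcz, qya, qyc, qxb, qzb, -⟩ := h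
            cases hE : tau p (t+1) ((i - (t+1)).val)
            · rw [hE] at hrec hC1 hC2
              simp only [Bool.xor_false] at hrec
              rw [hrec] at hB1 hB2
              simp only [Bool.not_true, Bool.not_false] at hB2 hC2
              simp only [BK] at hB1 hB2 hC1 hC2
              rcases hu with rfl | rfl | rfl
              · exact ⟨b (t+1), (hKm (t+1)).2.1, pby, hC2.1⟩
              · exact absurd hub (hA _ _ hB2.2.2.2.2)
              · exact ⟨b (t+1), (hKm (t+1)).2.1, pby, hC2.2.1⟩
            · rw [hE] at hrec hC1 hC2
              simp only [Bool.true_xor, Bool.not_true] at hrec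
              rw [hrec] at hB1 hB2
              simp only [Bool.not_true, Bool.not_false] at hB2 hC2
              simp only [BK] at hB1 hB2 hC1 hC2
              rcases hu with rfl | rfl | rfl
              · exact absurd hub (hA _ _ hB2.1)
              · exact ⟨b (t+1), (hKm (t+1)).2.1, pby, hC2.2.2.2.2⟩
              · exact absurd hub (hA _ _ hB2.2.1)
    · refine ⟨(hKm t).1, (hmis t).2.2.2.2.1, (hmis t).2.1, ?_⟩
      cases hpt : p t <;> rw [hpt] at h <;> simp only [Pat] at h
      · exact ⟨a (t+1), (hKm (t+1)).1, h.2.1, h.2.2.2.2.1⟩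
      · exact ⟨b (t+1), (hKm (t+1)).2.1, h.2.2.1, h.2.2.2.2.2.1⟩
    · refine ⟨(hKm t).2.2, Ne.symm (hmis t).2.2.2.2.2.1, (hmis t).2.2.1, ?_⟩
      cases hpt : p t <;> rw [hpt] at h <;> simp only [Pat] at h
      · exact ⟨a (t+1), (hKm (t+1)).1, h.2.1, h.2.2.2.2.2.1⟩
      · exact ⟨b (t+1), (hKm (t+1)).2.1, h.2.2.1, h.2.2.2.2.2.2.1⟩

/-- Lemma 4.11: description of the second out-neighborhoods in `D[K(C)]`. -/
theorem stmt10 {V : Type*} [Fintype V] (A : V → V → Prop) (hA : Oriented A)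
    (hP : MissingPaths2 A) (k : ℕ) (a b c : ZMod k → V)
    (hC : IsDoubleCycle A k a b c) (K : Set V) (hK : K = Kset a b c) :
    ∀ t,
      secondOutIn A K (a t) =
        (inIn A K (a t) ∪ {b t}) \ {a (t + 1), b (t + 1), c (t + 1), c t} ∧
      secondOutIn A K (c t) =
        (inIn A K (c t) ∪ {b t}) \ {a (t + 1), b (t + 1), c (t + 1), a t} ∧
      secondOutIn A K (b t) =
        (inIn A K (b t) ∪ {a t, c t}) \ {a (t + 1), b (t + 1), c (t + 1)} := by
  obtain ⟨hk2, hmiss, hdisj, hloses⟩ := hC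
  haveI : NeZero k := ⟨by omega⟩
  haveI : Fact (1 < k) := ⟨by omega⟩
  have hk1 : (1 : ZMod k) ≠ 0 := one_ne_zero
  have hsymm : ∀ u v : V, IsMissing A u v → IsMissing A v u := by
    rintro u v ⟨h1, h2, h3⟩; exact ⟨h1.symm, h3, h2⟩
  have hchar : ∀ i : ZMod k, ({w | IsMissing A (a i) w} = {b i}) ∧
      ({w | IsMissing A (c i) w} = {b i}) ∧ ({w | IsMissing A (b i) w} = {a i, c i}) := by
    intro i
    obtain ⟨hab, hbc, hacne⟩ := hmiss i
    have hba := hsymm _ _ hab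
    have hcb := hsymm _ _ hbc
    have h2b : 1 < mdeg A (b i) := by
      rw [mdeg, Set.one_lt_ncard_iff (Set.toFinite _)]
      exact ⟨a i, c i, hba, hbc, hacne⟩
    have hda : mdeg A (a i) = 1 ∧ mdeg A (b i) = 2 := by
      rcases hP _ _ hab with h | h
      · exact h
      · omega
    have hdc : mdeg A (c i) = 1 := by
      rcases hP _ _ hcb with h | h
      · exact h.1
      · omega
    refine ⟨?_, ?_, ?_⟩
    · obtain ⟨x, hx⟩ := Set.ncard_eq_one.mp hda.1
      have hbx : b i ∈ ({x} : Set V) := hx ▸ (show b i ∈ {w | IsMissing A (a i) w} from hab)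
      rw [hx, ← Set.mem_singleton_iff.mp hbx]
    · obtain ⟨x, hx⟩ := Set.ncard_eq_one.mp hdc
      have hbx : b i ∈ ({x} : Set V) := hx ▸ (show b i ∈ {w | IsMissing A (c i) w} from hcb)
      rw [hx, ← Set.mem_singleton_iff.mp hbx]
    · obtain ⟨x, y, hxy, hset⟩ := Set.ncard_eq_two.mp hda.2
      have hax : a i ∈ ({x, y} : Set V) := hset ▸ (show a i ∈ {w | IsMissing A (b i) w} from hba)
      have hcx : c i ∈ ({x, y} : Set V) := hset ▸ (show c i ∈ {w | IsMissing A (b i) w} from hbc)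
      rw [hset]
      simp only [Set.mem_insert_iff, Set.mem_singleton_iff] at hax hcx
      rcases hax with h1 | h1 <;> rcases hcx with h2 | h2
      · exact absurd (h1.trans h2.symm) hacne
      · rw [← h1, ← h2]
      · rw [← h1, ← h2]; exact Set.pair_comm _ _
      · exact absurd (h1.trans h2.symm) hacne
  have hmA : ∀ (i : ZMod k) u, IsMissing A (a i) u → u = b i := by
    intro i u h
    have h' : u ∈ {w | IsMissing A (a i) w} := h
    rw [(hchar i).1] at h'; exact h'
  have hmC : ∀ (i : ZMod k) u, IsMissing A (c i) u → u = b i := by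
    intro i u h
    have h' : u ∈ {w | IsMissing A (c i) w} := h
    rw [(hchar i).2.1] at h'; exact h'
  have hmB : ∀ (i : ZMod k) u, IsMissing A (b i) u → u = a i ∨ u = c i := by
    intro i u h
    have h' : u ∈ {w | IsMissing A (b i) w} := h
    rw [(hchar i).2.2] at h'; simpa using h'
  have hd : ∀ i j : ZMod k, i ≠ j → ∀ u, (u = a i ∨ u = b i ∨ u = c i) →
      ∀ v, (v = a j ∨ v = b j ∨ v = c j) → u ≠ v := by
    intro i j hij u hu v hv heq
    have hdis := hdisj i j hij
    rw [Set.disjoint_left] at hdis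
    refine hdis (a := u) ?_ ?_
    · rcases hu with rfl | rfl | rfl <;> simp
    · rw [heq]; rcases hv with rfl | rfl | rfl <;> simp
  have htot : ∀ i j : ZMod k, i ≠ j → ∀ u, (u = a i ∨ u = b i ∨ u = c i) →
      ∀ v, (v = a j ∨ v = b j ∨ v = c j) → ¬ A u v → A v u := by
    intro i j hij u hu v hv h1
    by_contra h2
    have hm : IsMissing A u v := ⟨hd i j hij u hu v hv, h1, h2⟩
    rcases hu with rfl | rfl | rfl
    · exact hd j i hij.symm v hv (b i) (Or.inr (Or.inl rfl)) (hmA i v hm)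
    · rcases hmB i v hm with h | h
      · exact hd j i hij.symm v hv (a i) (Or.inl rfl) h
      · exact hd j i hij.symm v hv (c i) (Or.inr (Or.inr rfl)) h
    · exact hd j i hij.symm v hv (b i) (Or.inr (Or.inl rfl)) (hmC i v hm)
  have hactot : ∀ i : ZMod k, A (a i) (c i) ∨ A (c i) (a i) := by
    intro i
    by_contra hcon
    push_neg at hcon
    have hm : IsMissing A (a i) (c i) := ⟨(hmiss i).2.2, hcon.1, hcon.2⟩
    exact (hmiss i).2.1.1 (hmA i _ hm).symm
  have hmis : ∀ i : ZMod k, ¬ A (a i) (b i) ∧ ¬ A (b i) (a i) ∧ ¬ A (b i) (c i) ∧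
      ¬ A (c i) (b i) ∧ a i ≠ b i ∧ b i ≠ c i ∧ a i ≠ c i := by
    intro i
    obtain ⟨⟨h1, h2, h3⟩, ⟨h4, h5, h6⟩, h7⟩ := hmiss i
    exact ⟨h2, h3, h5, h6, h1, h4, h7⟩
  have hone : ∀ t : ZMod k, t ≠ t + 1 := fun t h => hk1 (left_eq_add.mp h)
  -- pattern dichotomy
  have hdi : ∀ t : ZMod k, ∃ e : Bool, Pat A a b c e t := by
    intro t
    obtain ⟨L1, L2, L3, L4⟩ := hloses t
    have T := htot t (t+1) (hone t)
    rcases L1 with ⟨h1, h2, h3, h4, h5, h6⟩ | ⟨h1, h2, h3, h4, h5, h6⟩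
    · refine ⟨true, ?_⟩
      rcases L2 with ⟨g1, g2, g3, g4, g5, g6⟩ | ⟨g1, g2, g3, g4, g5, g6⟩
      · exact absurd g1 h3
      rcases L3 with ⟨f1, f2, f3, f4, f5, f6⟩ | ⟨f1, f2, f3, f4, f5, f6⟩
      · exact absurd f1 h5
      rcases L4 with ⟨e1, e2, e3, e4, e5, e6⟩ | ⟨e1, e2, e3, e4, e5, e6⟩
      swap
      · exact absurd e1 g5
      show PatP A a b c t
      exact ⟨h1, g1, h2, f2, e2,
        T _ (Or.inl rfl) _ (Or.inr (Or.inl rfl)) h3,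
        T _ (Or.inr (Or.inr rfl)) _ (Or.inr (Or.inl rfl)) f5,
        T _ (Or.inr (Or.inl rfl)) _ (Or.inl rfl) h5,
        T _ (Or.inr (Or.inl rfl)) _ (Or.inr (Or.inr rfl)) g5,
        h4, h6, g6, f6⟩
    · refine ⟨false, ?_⟩
      rcases L2 with ⟨g1, g2, g3, g4, g5, g6⟩ | ⟨g1, g2, g3, g4, g5, g6⟩
      swap
      · exact absurd g2 h5
      rcases L3 with ⟨f1, f2, f3, f4, f5, f6⟩ | ⟨f1, f2, f3, f4, f5, f6⟩
      swap
      · exact absurd f1 h5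
      rcases L4 with ⟨e1, e2, e3, e4, e5, e6⟩ | ⟨e1, e2, e3, e4, e5, e6⟩
      · exact absurd e1 h5
      show PatX A a b c t
      exact ⟨h1, h2, g2, f2,
        T _ (Or.inl rfl) _ (Or.inl rfl) h3,
        T _ (Or.inr (Or.inr rfl)) _ (Or.inl rfl) f5,
        T _ (Or.inl rfl) _ (Or.inr (Or.inr rfl)) g3,
        T _ (Or.inr (Or.inr rfl)) _ (Or.inr (Or.inr rfl)) e5,
        T _ (Or.inr (Or.inl rfl)) _ (Or.inr (Or.inl rfl)) h5,
        h4, g4, h6, f6, e6⟩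
  choose p hp using hdi
  -- cyclic induction
  have hind : ∀ n : ℕ, 1 ≤ n → n ≤ k - 1 → ∀ t : ZMod k,
      BK A a b c (tau p t n) t (t + (n : ℕ)) := by
    intro n
    induction n with
    | zero => intro h; omega
    | succ n ih =>
      intro _ hnk t
      rcases Nat.eq_zero_or_pos n with rfl | hn
      · have h := hp t
        simp only [Nat.zero_add, Nat.cast_one]
        have hres : tau p t 1 = p t := by simp [tau]
        rw [hres]
        cases hpt : p t <;> rw [hpt] at h <;> simp only [Pat] at h
        · exact ⟨h.2.2.2.2.1, h.2.2.2.2.2.1, h.2.2.2.2.2.2.1, h.2.2.2.2.2.2.2.1,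
            h.2.2.2.2.2.2.2.2.1⟩
        · exact ⟨h.2.2.2.2.2.1, h.2.2.2.2.2.2.1, h.2.2.2.2.2.2.2.1, h.2.2.2.2.2.2.2.2.1⟩
      · have hIH := ih hn (by omega) (t + 1)
        have hcastne : ((n + 1 : ℕ) : ZMod k) ≠ 0 := by
          rw [Ne, ZMod.natCast_eq_zero_iff]
          intro hdvd
          have := Nat.le_of_dvd (by omega) hdvd
          omega
        have hjne : t ≠ t + ((n + 1 : ℕ) : ZMod k) := fun h => hcastne (left_eq_add.mp h)
        have hj : t + ((n + 1 : ℕ) : ZMod k) = t + 1 + ((n : ℕ) : ZMod k) := by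
          push_cast; ring
        rw [hj] at hjne ⊢
        have h := hp t
        have hADb := hd (t+1) t (hone t).symm
        have hT := htot t (t + 1 + ((n : ℕ) : ZMod k)) hjne
        have hres : tau p t (n + 1) = xor (p t) (tau p (t+1) n) := by simp [tau]
        rw [hres]
        cases hpt : p t
        · rw [hpt] at h
          simp only [Pat] at h
          obtain ⟨axy, bxx, bxz, cxy, xa, xc, za, zc, yb, nax, naz, nby, ncx, ncz⟩ := h
          cases hE : tau p (t+1) n <;> rw [hE] at hIH <;>
            simp only [Bool.false_xor]
          · obtain ⟨i1, i2, i3, i4, i5⟩ := hIH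
            exact ⟨force nax (hADb _ (Or.inl rfl) _ (Or.inl rfl)) (hA _ _ xa) i1
                (hT _ (Or.inl rfl) _ (Or.inl rfl)),
              force ncx (hADb _ (Or.inl rfl) _ (Or.inr (Or.inr rfl))) (hA _ _ xc) i1
                (hT _ (Or.inr (Or.inr rfl)) _ (Or.inl rfl)),
              force nax (hADb _ (Or.inl rfl) _ (Or.inl rfl)) (hA _ _ xa) i3
                (hT _ (Or.inl rfl) _ (Or.inr (Or.inr rfl))),
              force ncx (hADb _ (Or.inl rfl) _ (Or.inr (Or.inr rfl))) (hA _ _ xc) i3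
                (hT _ (Or.inr (Or.inr rfl)) _ (Or.inr (Or.inr rfl))),
              force nby (hADb _ (Or.inr (Or.inl rfl)) _ (Or.inr (Or.inl rfl))) (hA _ _ yb) i5
                (hT _ (Or.inr (Or.inl rfl)) _ (Or.inr (Or.inl rfl)))⟩
          · obtain ⟨i1, i2, i3, i4⟩ := hIH
            exact ⟨force nax (hADb _ (Or.inl rfl) _ (Or.inl rfl)) (hA _ _ xa) i1
                (hT _ (Or.inl rfl) _ (Or.inr (Or.inl rfl))),
              force ncx (hADb _ (Or.inl rfl) _ (Or.inr (Or.inr rfl))) (hA _ _ xc) i1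
                (hT _ (Or.inr (Or.inr rfl)) _ (Or.inr (Or.inl rfl))),
              force nby (hADb _ (Or.inr (Or.inl rfl)) _ (Or.inr (Or.inl rfl))) (hA _ _ yb) i3
                (hT _ (Or.inr (Or.inl rfl)) _ (Or.inl rfl)),
              force nby (hADb _ (Or.inr (Or.inl rfl)) _ (Or.inr (Or.inl rfl))) (hA _ _ yb) i4
                (hT _ (Or.inr (Or.inl rfl)) _ (Or.inr (Or.inr rfl)))⟩
        · rw [hpt] at h
          simp only [Pat] at h
          obtain ⟨pax, paz, pby, pcx, pcz, qya, qyc, qxb, qzb, nay, nbx, nbz, ncy⟩ := h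
          cases hE : tau p (t+1) n <;> rw [hE] at hIH <;>
            simp only [Bool.true_xor, Bool.not_false, Bool.not_true]
          · obtain ⟨i1, i2, i3, i4, i5⟩ := hIH
            exact ⟨force nay (hADb _ (Or.inr (Or.inl rfl)) _ (Or.inl rfl)) (hA _ _ qya) i5
                (hT _ (Or.inl rfl) _ (Or.inr (Or.inl rfl))),
              force ncy (hADb _ (Or.inr (Or.inl rfl)) _ (Or.inr (Or.inr rfl))) (hA _ _ qyc) i5
                (hT _ (Or.inr (Or.inr rfl)) _ (Or.inr (Or.inl rfl))),
              force nbx (hADb _ (Or.inl rfl) _ (Or.inr (Or.inl rfl))) (hA _ _ qxb) i1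
                (hT _ (Or.inr (Or.inl rfl)) _ (Or.inl rfl)),
              force nbx (hADb _ (Or.inl rfl) _ (Or.inr (Or.inl rfl))) (hA _ _ qxb) i3
                (hT _ (Or.inr (Or.inl rfl)) _ (Or.inr (Or.inr rfl)))⟩
          · obtain ⟨i1, i2, i3, i4⟩ := hIH
            exact ⟨force nay (hADb _ (Or.inr (Or.inl rfl)) _ (Or.inl rfl)) (hA _ _ qya) i3
                (hT _ (Or.inl rfl) _ (Or.inl rfl)),
              force ncy (hADb _ (Or.inr (Or.inl rfl)) _ (Or.inr (Or.inr rfl))) (hA _ _ qyc) i3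
                (hT _ (Or.inr (Or.inr rfl)) _ (Or.inl rfl)),
              force nay (hADb _ (Or.inr (Or.inl rfl)) _ (Or.inl rfl)) (hA _ _ qya) i4
                (hT _ (Or.inl rfl) _ (Or.inr (Or.inr rfl))),
              force ncy (hADb _ (Or.inr (Or.inl rfl)) _ (Or.inr (Or.inr rfl))) (hA _ _ qyc) i4
                (hT _ (Or.inr (Or.inr rfl)) _ (Or.inr (Or.inr rfl))),
              force nbx (hADb _ (Or.inl rfl) _ (Or.inr (Or.inl rfl))) (hA _ _ qxb) i1
                (hT _ (Or.inr (Or.inl rfl)) _ (Or.inr (Or.inl rfl)))⟩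
  -- total parity
  have hpar : ∀ t : ZMod k, tau p t k = true := by
    intro t
    obtain ⟨m, hm⟩ : ∃ m, k = m + 1 := ⟨k - 1, by omega⟩
    have hBB := hind m (by omega) (by omega) (t + 1)
    have heq : (t + 1) + ((m : ℕ) : ZMod k) = t := by
      have : ((m : ℕ) : ZMod k) = ((k : ℕ) : ZMod k) - 1 := by
        rw [hm]; push_cast; ring
      rw [this, ZMod.natCast_self]; ring
    rw [heq] at hBB
    have h := hp t
    have hres : tau p t k = xor (p t) (tau p (t+1) m) := by
      rw [congrArg (tau p t) hm]; simp [tau]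
    rw [hres]
    cases hpt : p t <;> rw [hpt] at h <;> simp only [Pat] at h <;>
      cases hE : tau p (t+1) m <;> rw [hE] at hBB <;> simp only [BK] at hBB
    · exact absurd h.2.2.2.2.1 (hA _ _ hBB.1)
    · rfl
    · rfl
    · exact absurd h.2.2.2.2.2.2.2.1 (hA _ _ hBB.1)
  -- full structure
  have hstr : ∀ i j, i ≠ j → BK A a b c (tau p i ((j - i).val)) i j ∧
      BK A a b c (!(tau p i ((j - i).val))) j i := by
    intro i j hij
    have hji : j - i ≠ 0 := sub_ne_zero.2 (Ne.symm hij)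
    have hij' : i - j ≠ 0 := sub_ne_zero.2 hij
    have hn1 : 1 ≤ (j - i).val := Nat.one_le_iff_ne_zero.2 fun h0 => hji ((ZMod.val_eq_zero _).1 h0)
    have hm1 : 1 ≤ (i - j).val := Nat.one_le_iff_ne_zero.2 fun h0 => hij' ((ZMod.val_eq_zero _).1 h0)
    have hnlt : (j - i).val < k := ZMod.val_lt _
    have hmlt : (i - j).val < k := ZMod.val_lt _
    have hcn : (((j - i).val : ℕ) : ZMod k) = j - i := ZMod.natCast_rightInverse _
    have hcm : (((i - j).val : ℕ) : ZMod k) = i - j := ZMod.natCast_rightInverse _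
    have h1 := hind (j - i).val hn1 (by omega) i
    rw [show i + (((j - i).val : ℕ) : ZMod k) = j by rw [hcn]; ring] at h1
    have h2 := hind (i - j).val hm1 (by omega) j
    rw [show j + (((i - j).val : ℕ) : ZMod k) = i by rw [hcm]; ring] at h2
    have hsum : (j - i).val + (i - j).val = k := by
      have hneg : i - j = -(j - i) := by ring
      rw [hneg, ZMod.neg_val, if_neg hji]
      omega
    have htk : xor (tau p i ((j - i).val)) (tau p j ((i - j).val)) = true := by
      have h0 : tau p i ((j - i).val + (i - j).val) = true := by
        rw [congrArg (tau p i) hsum]; exact hpar i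
      rw [tau_add] at h0
      rwa [show i + (((j - i).val : ℕ) : ZMod k) = j by rw [hcn]; ring] at h0
    refine ⟨h1, ?_⟩
    cases hx : tau p i ((j - i).val)
    · rw [hx, Bool.false_xor] at htk
      rw [htk] at h2
      simpa using h2
    · rw [hx, Bool.true_xor, Bool.not_eq_true'] at htk
      rw [htk] at h2
      simpa using h2
  -- recurrence
  have herec : ∀ t j : ZMod k, j ≠ t → j ≠ t + 1 →
      tau p t ((j - t).val) = xor (p t) (tau p (t+1) ((j - (t+1)).val)) := by
    intro t j h1 h2
    have hjt : j - t ≠ 0 := sub_ne_zero.2 h1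
    have hn1 : 1 ≤ (j - t).val := Nat.one_le_iff_ne_zero.2 fun h0 => hjt ((ZMod.val_eq_zero _).1 h0)
    have hnlt : (j - t).val < k := ZMod.val_lt _
    have hcn : (((j - t).val : ℕ) : ZMod k) = j - t := ZMod.natCast_rightInverse _
    have hn2 : (j - t).val ≠ 1 := by
      intro heq
      apply h2
      have hh : j - t = 1 := by rw [← hcn, heq, Nat.cast_one]
      rw [← hh]; ring
    have hval : (j - (t+1)).val = (j - t).val - 1 := by
      have hcast : j - (t + 1) = ((((j - t).val - 1 : ℕ)) : ZMod k) := by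
        rw [Nat.cast_sub hn1, Nat.cast_one, hcn]; ring
      rw [hcast, ZMod.val_cast_of_lt (by omega)]
    obtain ⟨m, hm⟩ : ∃ m, (j - t).val = m + 1 := ⟨(j - t).val - 1, by omega⟩
    rw [hval, hm]
    simp [tau]
  -- assemble
  subst hK
  have hKm : ∀ i : ZMod k, a i ∈ Kset a b c ∧ b i ∈ Kset a b c ∧ c i ∈ Kset a b c :=
    fun i => ⟨⟨i, Or.inl rfl⟩, ⟨i, Or.inr (Or.inl rfl)⟩, ⟨i, Or.inr (Or.inr rfl)⟩⟩
  have hKa : ∀ u ∈ Kset a b c, ∃ i : ZMod k, u = a i ∨ u = b i ∨ u = c i := fun u hu => hu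
  intro t
  refine ⟨KEY A a b c p _ hA hk1 hKm hKa hmis hactot htot hp hstr herec t, ?_,
    KEYB A a b c p _ hA hk1 hKm hKa hmis htot hp hstr herec t⟩
  have hKm' : ∀ i : ZMod k, c i ∈ Kset a b c ∧ b i ∈ Kset a b c ∧ a i ∈ Kset a b c :=
    fun i => ⟨(hKm i).2.2, (hKm i).2.1, (hKm i).1⟩
  have hKa' : ∀ u ∈ Kset a b c, ∃ i : ZMod k, u = c i ∨ u = b i ∨ u = a i := by
    intro u hu
    obtain ⟨i, h⟩ := hKa u hu
    exact ⟨i, by tauto⟩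
  have hmis' : ∀ i : ZMod k, ¬ A (c i) (b i) ∧ ¬ A (b i) (c i) ∧ ¬ A (b i) (a i) ∧
      ¬ A (a i) (b i) ∧ c i ≠ b i ∧ b i ≠ a i ∧ c i ≠ a i := by
    intro i
    obtain ⟨m1, m2, m3, m4, m5, m6, m7⟩ := hmis i
    exact ⟨m4, m3, m2, m1, m6.symm, m5.symm, m7.symm⟩
  have hac' : ∀ i : ZMod k, A (c i) (a i) ∨ A (a i) (c i) := fun i => (hactot i).symm
  have htot' : ∀ i j : ZMod k, i ≠ j → ∀ u, (u = c i ∨ u = b i ∨ u = a i) →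
      ∀ v, (v = c j ∨ v = b j ∨ v = a j) → ¬ A u v → A v u := by
    intro i j hij u hu v hv
    exact htot i j hij u (by tauto) v (by tauto)
  have hp' : ∀ s, Pat A c b a (p s) s := by
    intro s
    have h := hp s
    cases hps : p s <;> rw [hps] at h <;>
      simp only [Pat, PatX, PatP] at h ⊢ <;> tauto
  have hstr' : ∀ i j, i ≠ j → BK A c b a (tau p i ((j - i).val)) i j ∧
      BK A c b a (!(tau p i ((j - i).val))) j i := by
    intro i j hij
    obtain ⟨h1, h2⟩ := hstr i j hij
    cases hx : tau p i ((j - i).val) <;> rw [hx] at h1 h2 <;>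
      simp only [Bool.not_false, Bool.not_true] at h1 h2 ⊢ <;>
      simp only [BK] at h1 h2 ⊢ <;>
      exact ⟨by tauto, by tauto⟩
  have hres := KEY A c b a p _ hA hk1 hKm' hKa' hmis' hac' htot' hp' hstr' herec t
  have hsets : ({c (t+1), b (t+1), a (t+1), a t} : Set V) = {a (t+1), b (t+1), c (t+1), a t} := by
    ext v
    simp only [Set.mem_insert_iff, Set.mem_singleton_iff]
    tauto
  have hKset : Kset c b a = Kset a b c := by
    ext v
    simp only [Kset, Set.mem_setOf_eq]
    constructor <;> rintro ⟨i, h⟩ <;> exact ⟨i, by tauto⟩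
  rw [hsets] at hres
  exact hres

end SSNC
end
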